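/- arXiv:math/0407002 — 4 statements merged into one kernel-verified Lean document; each statement's English description precedes it below -/
import Mathlib

section
/- Let A be a smooth n-manifold and k ≥ 1. The projection π_{k+1,k} : F_{k+1}(A×J) → F_k(A×J) forgetting the last point is a locally trivial fiber bundle: for every point q = ((q_1,t_1),…,(q_k,t_k)) ∈ F_k(A×J) there exist an open neighborhood U of q in F_k(A×J) and a homeomorphism h : π_{k+1,k}^{-1}(U) → U × ((A × [−k, k]) \ {(q_1,t_1),…,(q_k,t_k)}) whose first component is π_{k+1,k}. -/
open scoped Manifold unitInterval

noncomputable section ConfigPrelude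

/-- The ordered configuration space of `k` distinct points in `M`. -/
def Config (M : Type*) [TopologicalSpace M] (k : ℕ) : Type _ :=
  {x : Fin k → M // Function.Injective x}

instance Config.instTopologicalSpace (M : Type*) [TopologicalSpace M] (k : ℕ) :
    TopologicalSpace (Config M k) :=
  inferInstanceAs (TopologicalSpace {x : Fin k → M // Function.Injective x})

/-- The subspace inclusion `F₂(M) ↪ M × M`. -/
def configIncl₂ (M : Type*) [TopologicalSpace M] : C(Config M 2, M × M) :=
  ⟨fun x => (x.1 0, x.1 1),
    ((continuous_apply (0 : Fin 2)).comp continuous_subtype_val).prodMk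
      ((continuous_apply (1 : Fin 2)).comp continuous_subtype_val)⟩

/-- A homotopy equivalence `f : A → B` is an F₂-homotopy equivalence if there is a
homotopy equivalence `φ : F₂(A) → F₂(B)` with `ι_B ∘ φ` homotopic to `(f × f) ∘ ι_A`. -/
def IsF2HomotopyEquiv {A B : Type*} [TopologicalSpace A] [TopologicalSpace B]
    (f : ContinuousMap.HomotopyEquiv A B) : Prop :=
  ∃ φ : ContinuousMap.HomotopyEquiv (Config A 2) (Config B 2),
    ((configIncl₂ B).comp φ.toFun).Homotopic
      ((f.toFun.prodMap f.toFun).comp (configIncl₂ A))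

/-- A continuous map is a homotopy equivalence. -/
def IsHtpyEquiv {X Y : Type*} [TopologicalSpace X] [TopologicalSpace Y] (f : C(X, Y)) : Prop :=
  ∃ g : C(Y, X), (g.comp f).Homotopic (ContinuousMap.id X) ∧
    (f.comp g).Homotopic (ContinuousMap.id Y)

/-- The projection of a configuration of `k` points onto its first `r` points. -/
def configProjLE (M : Type*) [TopologicalSpace M] {k r : ℕ} (h : r ≤ k) :
    C(Config M k, Config M r) :=
  ⟨fun x => ⟨fun i => x.1 (Fin.castLE h i),
      fun i j hij => Fin.ext (by simpa using congrArg Fin.val (x.2 hij))⟩, by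
    apply Continuous.subtype_mk
    apply continuous_pi
    intro i
    exact (continuous_apply (Fin.castLE h i)).comp continuous_subtype_val⟩

/-- `F_k(A×J)` : configurations `((a₁,t₁),…,(a_k,t_k))` in `A × ℝ` with `|tᵢ| ≤ i − 1`
(0-indexed: `|t_i| ≤ i`). -/
def ConfigJ (A : Type*) [TopologicalSpace A] (k : ℕ) : Type _ :=
  {x : Fin k → A × ℝ // Function.Injective x ∧ ∀ i : Fin k, |(x i).2| ≤ (i.val : ℝ)}

instance ConfigJ.instTopologicalSpace (A : Type*) [TopologicalSpace A] (k : ℕ) :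
    TopologicalSpace (ConfigJ A k) :=
  inferInstanceAs (TopologicalSpace
    {x : Fin k → A × ℝ // Function.Injective x ∧ ∀ i : Fin k, |(x i).2| ≤ (i.val : ℝ)})

/-- The subspace inclusion `F_k(A×J) ↪ F_k(A×ℝ)`. -/
def configJIncl (A : Type*) [TopologicalSpace A] (k : ℕ) :
    C(ConfigJ A k, Config (A × ℝ) k) :=
  ⟨fun x => ⟨x.1, x.2.1⟩, Continuous.subtype_mk continuous_subtype_val _⟩

/-- The projection of `F_k(A×J)` onto the first `r` points. -/
def configJProjLE (A : Type*) [TopologicalSpace A] {k r : ℕ} (h : r ≤ k) :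
    C(ConfigJ A k, ConfigJ A r) :=
  ⟨fun x => ⟨fun i => x.1 (Fin.castLE h i),
      ⟨fun i j hij => Fin.ext (by simpa using congrArg Fin.val (x.2.1 hij)),
       fun i => by simpa using x.2.2 (Fin.castLE h i)⟩⟩, by
    apply Continuous.subtype_mk
    apply continuous_pi
    intro i
    exact (continuous_apply (Fin.castLE h i)).comp continuous_subtype_val⟩

lemma abs_coe_end {k : ℕ} (ε : ({-(k : ℝ), (k : ℝ)} : Set ℝ)) : |(ε : ℝ)| = (k : ℝ) := by
  rcases ε.2 with h | h <;> rw [h] <;> simp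

/-- Appending a point `(a, ε)` with `ε ∈ {−k, k}` to a configuration in `F_k(A×J)` gives a
configuration in `∂F_{k+1}(A×J) ⊆ F_{k+1}(A×J)`. -/
def configJAppend (A : Type*) [TopologicalSpace A] (k : ℕ) :
    C(ConfigJ A k × (A × ({-(k : ℝ), (k : ℝ)} : Set ℝ)), ConfigJ A (k + 1)) := by
  refine ⟨fun p => ⟨Fin.snoc p.1.1 (p.2.1, (p.2.2 : ℝ)), ?_, ?_⟩, ?_⟩
  · intro i j hij
    induction i using Fin.lastCases with
    | last =>
      induction j using Fin.lastCases with
      | last => rfl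
      | cast j =>
        exfalso
        rw [Fin.snoc_last, Fin.snoc_castSucc] at hij
        have h1 : |((p.1.1 j).2)| ≤ (j.val : ℝ) := p.1.2.2 j
        have h2 : ((p.1.1 j).2) = (p.2.2 : ℝ) := (congrArg Prod.snd hij).symm
        have h3 : ((j.val : ℕ) : ℝ) < (k : ℝ) := by exact_mod_cast j.2
        rw [h2, abs_coe_end] at h1
        try simp only [Fin.val_castSucc] at *
        linarith
    | cast i =>
      induction j using Fin.lastCases with
      | last =>
        exfalso
        rw [Fin.snoc_last, Fin.snoc_castSucc] at hij
        have h1 : |((p.1.1 i).2)| ≤ (i.val : ℝ) := p.1.2.2 i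
        have h2 : ((p.1.1 i).2) = (p.2.2 : ℝ) := congrArg Prod.snd hij
        have h3 : ((i.val : ℕ) : ℝ) < (k : ℝ) := by exact_mod_cast i.2
        rw [h2, abs_coe_end] at h1
        linarith
      | cast j =>
        rw [Fin.snoc_castSucc, Fin.snoc_castSucc] at hij
        exact congrArg Fin.castSucc (p.1.2.1 hij)
  · intro i
    induction i using Fin.lastCases with
    | last => rw [Fin.snoc_last]; simp [abs_coe_end]
    | cast i => rw [Fin.snoc_castSucc]; simpa using p.1.2.2 i
  · refine Continuous.subtype_mk (continuous_pi fun i => ?_) _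
    induction i using Fin.lastCases with
    | last =>
      simp only [Fin.snoc_last]
      exact ((continuous_fst.comp continuous_snd).prodMk
        (continuous_subtype_val.comp (continuous_snd.comp continuous_snd)))
    | cast i =>
      simp only [Fin.snoc_castSucc]
      exact (continuous_apply i).comp (continuous_subtype_val.comp continuous_fst)

/-- A two-point configuration. -/
def config2 {M : Type*} [TopologicalSpace M] (p q : M) (h : p ≠ q) : Config M 2 :=
  ⟨![p, q], by intro i j hij; fin_cases i <;> fin_cases j <;> simp_all⟩

/-- A three-point configuration. -/
def config3 {M : Type*} [TopologicalSpace M] (p q r : M)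
    (h1 : p ≠ q) (h2 : p ≠ r) (h3 : q ≠ r) : Config M 3 :=
  ⟨![p, q, r], by intro i j hij; fin_cases i <;> fin_cases j <;> simp_all⟩

/-- Generating relation for the unreduced suspension. -/
def SuspRel (X : Type*) : (X × unitInterval) → (X × unitInterval) → Prop := fun p q =>
  (p.2 = 0 ∧ q.2 = 0) ∨ (p.2 = 1 ∧ q.2 = 1)

/-- The unreduced suspension of a space. -/
def Susp (X : Type*) [TopologicalSpace X] : Type _ := Quot (SuspRel X)

instance Susp.instTopologicalSpace (X : Type*) [TopologicalSpace X] :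
    TopologicalSpace (Susp X) :=
  inferInstanceAs (TopologicalSpace (Quot (SuspRel X)))

/-- The unreduced suspension as an endofunctor of `TopCat` (on objects). -/
def SuspT (X : TopCat) : TopCat := TopCat.of (Susp X)

/-- The iterated unreduced suspension. -/
def IterSuspT : ℕ → TopCat → TopCat
  | 0, X => X
  | m + 1, X => SuspT (IterSuspT m X)

/-- Generating relation for the double mapping cylinder of a span `X ←f− W −g→ Z`. -/
inductive DMCRel {W X Z : Type*} (f : W → X) (g : W → Z) :
    (X ⊕ ((W × unitInterval) ⊕ Z)) → (X ⊕ ((W × unitInterval) ⊕ Z)) → Prop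
  | zero (w : W) : DMCRel f g (Sum.inl (f w)) (Sum.inr (Sum.inl (w, 0)))
  | one (w : W) : DMCRel f g (Sum.inr (Sum.inr (g w))) (Sum.inr (Sum.inl (w, 1)))

/-- The double mapping cylinder of a span `X ←f− W −g→ Z`. -/
def DblCyl {W X Z : Type*} [TopologicalSpace W] [TopologicalSpace X] [TopologicalSpace Z]
    (f : W → X) (g : W → Z) : Type _ := Quot (DMCRel f g)

instance DblCyl.instTopologicalSpace {W X Z : Type*} [TopologicalSpace W] [TopologicalSpace X]
    [TopologicalSpace Z] (f : W → X) (g : W → Z) : TopologicalSpace (DblCyl f g) :=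
  inferInstanceAs (TopologicalSpace (Quot (DMCRel f g)))

/-- The homotopy fiber of `v : C → Y` over `y : Y`. -/
def HFiber {X Y : Type*} [TopologicalSpace X] [TopologicalSpace Y] (v : C(X, Y)) (y : Y) :
    Type _ :=
  {p : X × C(unitInterval, Y) // p.2 0 = v p.1 ∧ p.2 1 = y}

instance HFiber.instTopologicalSpace {X Y : Type*} [TopologicalSpace X] [TopologicalSpace Y]
    (v : C(X, Y)) (y : Y) : TopologicalSpace (HFiber v y) :=
  inferInstanceAs (TopologicalSpace {p : X × C(unitInterval, Y) // p.2 0 = v p.1 ∧ p.2 1 = y})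

/-- The standard homotopy pullback of `p : X → B` and `q : Y → B`. -/
def HPullback {X Y B : Type*} [TopologicalSpace X] [TopologicalSpace Y] [TopologicalSpace B]
    (p : C(X, B)) (q : C(Y, B)) : Type _ :=
  {u : X × C(unitInterval, B) × Y // u.2.1 0 = p u.1 ∧ u.2.1 1 = q u.2.2}

instance HPullback.instTopologicalSpace {X Y B : Type*} [TopologicalSpace X]
    [TopologicalSpace Y] [TopologicalSpace B] (p : C(X, B)) (q : C(Y, B)) :
    TopologicalSpace (HPullback p q) :=
  inferInstanceAs (TopologicalSpace
    {u : X × C(unitInterval, B) × Y // u.2.1 0 = p u.1 ∧ u.2.1 1 = q u.2.2})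

/-- A space is 2-connected if it is path-connected, simply connected, and has trivial `π₂`. -/
def TwoConnected (X : Type*) [TopologicalSpace X] : Prop :=
  PathConnectedSpace X ∧ SimplyConnectedSpace X ∧
    ∀ x : X, Subsingleton (HomotopyGroup (Fin 2) X x)

/-- A type retopologized with the discrete topology. -/
def DiscretePoints (α : Type*) : Type _ := α

instance DiscretePoints.instTopologicalSpace (α : Type*) :
    TopologicalSpace (DiscretePoints α) := ⊥

end ConfigPrelude



noncomputable section MoveAux

set_option linter.unusedSectionVars false

open Filter Topology Metric

namespace MoveAux

variable {V : Type*} [NormedAddCommGroup V] [NormedSpace ℝ V]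

/-- bump function: 1 on closedBall z r, 0 outside ball z (2r). -/
def bump (z : V) (r : ℝ) (x : V) : ℝ := max 0 (min 1 ((2*r - dist x z)/r))

lemma bump_nonneg (z : V) (r : ℝ) (x : V) : 0 ≤ bump z r x := le_max_left _ _

lemma bump_le_one (z : V) (r : ℝ) (x : V) : bump z r x ≤ 1 :=
  max_le zero_le_one (min_le_left _ _)

lemma bump_eq_zero {z : V} {r : ℝ} {x : V} (hr : 0 < r) (h : 2*r ≤ dist x z) :
    bump z r x = 0 := by
  have : min 1 ((2*r - dist x z)/r) ≤ 0 :=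
    (min_le_right _ _).trans (div_nonpos_of_nonpos_of_nonneg (by linarith) hr.le)
  exact max_eq_left this

lemma bump_eq_one {z : V} {r : ℝ} {x : V} (hr : 0 < r) (h : dist x z ≤ r) : bump z r x = 1 := by
  have h1 : (1:ℝ) ≤ (2*r - dist x z)/r := by
    rw [le_div_iff₀ hr]; linarith
  rw [bump, min_eq_left h1]; simp

lemma bump_le {z : V} {r : ℝ} {x : V} (hr : 0 < r) :
    bump z r x ≤ (2*r - dist x z)/r ∨ bump z r x = 0 := by
  rcases le_or_gt (dist x z) (2*r) with h | h
  · exact Or.inl (max_le (div_nonneg (by linarith) hr.le) (min_le_right _ _))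
  · exact Or.inr (bump_eq_zero hr h.le)

lemma abs_bump_sub (z : V) {r : ℝ} (hr : 0 < r) (x y : V) :
    |bump z r x - bump z r y| ≤ dist x y / r := by
  have h1 : |bump z r x - bump z r y| ≤ |min 1 ((2*r - dist x z)/r) - min 1 ((2*r - dist y z)/r)| := by
    simpa [bump, max_comm] using
      abs_max_sub_max_le_abs (min 1 ((2*r - dist x z)/r)) (min 1 ((2*r - dist y z)/r)) 0
  have h2 : |min 1 ((2*r - dist x z)/r) - min 1 ((2*r - dist y z)/r)|
      ≤ |(2*r - dist x z)/r - (2*r - dist y z)/r| := by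
    simpa using abs_min_sub_min_le_max 1 ((2*r - dist x z)/r) 1 ((2*r - dist y z)/r)
  have h3 : |(2*r - dist x z)/r - (2*r - dist y z)/r| = |dist y z - dist x z| / r := by
    rw [div_sub_div_same, abs_div, abs_of_pos hr]; ring_nf
  refine h1.trans (h2.trans ?_)
  rw [h3]
  have := abs_dist_sub_le y x z
  gcongr
  simpa [dist_comm] using this

lemma continuous_bump (z : V) (r : ℝ) : Continuous (bump z r) := by
  unfold bump; fun_prop

/-- The compactly supported translation taking `w` to `z`. -/
def mtrans (z : V) (r : ℝ) (w : V) (x : V) : V := x + bump z r x • (z - w)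

lemma continuous_mtrans (z : V) (r : ℝ) :
    Continuous (fun p : V × V => mtrans z r p.1 p.2) := by
  unfold mtrans
  have := continuous_bump z r
  fun_prop

lemma mtrans_eq_of_far {z : V} {r : ℝ} (hr : 0 < r) {x : V} (h : 2*r ≤ dist x z) (w : V) :
    mtrans z r w x = x := by
  rw [mtrans, bump_eq_zero hr h]; simp

lemma mtrans_self {z : V} {r : ℝ} (hr : 0 < r) {w : V} (hw : dist w z < r) :
    mtrans z r w w = z := by
  rw [mtrans, bump_eq_one hr hw.le]; simp

lemma dist_mtrans_mtrans_le {z : V} {r : ℝ} (hr : 0 < r) (w w' x : V) :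
    dist (mtrans z r w x) (mtrans z r w' x) ≤ dist w w' := by
  rw [mtrans, mtrans, dist_eq_norm]
  have e : x + bump z r x • (z - w) - (x + bump z r x • (z - w')) = bump z r x • (w' - w) := by
    rw [add_sub_add_left_eq_sub, ← smul_sub]
    congr 1
    abel
  rw [e, norm_smul, Real.norm_eq_abs, abs_of_nonneg (bump_nonneg z r x)]
  calc bump z r x * ‖w' - w‖ ≤ 1 * ‖w' - w‖ := by
        gcongr; exact bump_le_one z r x
    _ = dist w w' := by rw [one_mul, ← dist_eq_norm, dist_comm]

/-- anti-Lipschitz estimate. -/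
lemma dist_le_dist_mtrans {z : V} {r : ℝ} (hr : 0 < r) (w : V) (x y : V) :
    (1 - dist w z / r) * dist x y ≤ dist (mtrans z r w x) (mtrans z r w y) := by
  set c : V := (bump z r x - bump z r y) • (z - w) with hc
  have e : mtrans z r w x - mtrans z r w y = (x - y) + c := by
    rw [mtrans, mtrans, hc, sub_smul]
    abel
  have h1 : ‖x - y‖ ≤ ‖(x - y) + c‖ + ‖c‖ := by
    simpa using norm_add_le ((x - y) + c) (-c)
  have h2 : ‖c‖ ≤ (‖x - y‖ / r) * dist w z := by
    rw [hc, norm_smul, Real.norm_eq_abs]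
    have hb := abs_bump_sub z hr x y
    rw [dist_eq_norm] at hb
    have hn : ‖z - w‖ = dist w z := by rw [← dist_eq_norm, dist_comm]
    rw [hn]
    exact mul_le_mul_of_nonneg_right hb dist_nonneg
  rw [dist_eq_norm w z] at h2
  simp only [dist_eq_norm, e]
  have h4 : (1 - ‖w - z‖/r)*‖x - y‖ = ‖x - y‖ - ‖x - y‖/r*‖w - z‖ := by ring
  linarith

lemma mtrans_injective {z : V} {r : ℝ} (hr : 0 < r) {w : V} (hw : dist w z < r) :
    Function.Injective (mtrans z r w) := by
  intro x y hxy
  have h := dist_le_dist_mtrans (z := z) hr w x y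
  rw [hxy, dist_self] at h
  have hL : 0 < 1 - dist w z / r := by
    have : dist w z / r < 1 := (div_lt_one hr).2 hw
    linarith
  have hd : dist x y ≤ 0 := by nlinarith [dist_nonneg (x := x) (y := y)]
  exact dist_le_zero.mp hd

lemma mtrans_surjective [CompleteSpace V] {z : V} {r : ℝ} (hr : 0 < r) {w : V}
    (hw : dist w z < r) : Function.Surjective (mtrans z r w) := by
  intro y
  set L : NNReal := ⟨dist w z / r, div_nonneg dist_nonneg hr.le⟩ with hLdef
  have hcon : ContractingWith L (fun x => y - bump z r x • (z - w)) := by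
    constructor
    · rw [← NNReal.coe_lt_one]
      exact (div_lt_one hr).2 hw
    · apply LipschitzWith.of_dist_le_mul
      intro a b
      have e : dist (y - bump z r a • (z - w)) (y - bump z r b • (z - w))
          = ‖(bump z r a - bump z r b) • (z - w)‖ := by
        rw [dist_eq_norm]
        have e2 : (y - bump z r a • (z - w)) - (y - bump z r b • (z - w))
            = -((bump z r a - bump z r b) • (z - w)) := by
          rw [sub_smul]; abel
        rw [e2, norm_neg]
      rw [e, norm_smul, Real.norm_eq_abs]
      have hb := abs_bump_sub z hr a b
      have hn : ‖z - w‖ = dist w z := by rw [← dist_eq_norm, dist_comm]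
      rw [hn]
      calc |bump z r a - bump z r b| * dist w z ≤ (dist a b / r) * dist w z :=
            mul_le_mul_of_nonneg_right hb dist_nonneg
        _ = (dist w z / r) * dist a b := by ring
        _ = (L : ℝ) * dist a b := rfl
    
  obtain ⟨x, hx⟩ := hcon.exists_fixedPoint y (by simp [edist_ne_top])
  refine ⟨x, ?_⟩
  have : x = y - bump z r x • (z - w) := hx.1.symm
  rw [mtrans]
  rw [Function.IsFixedPt] at *
  nth_rewrite 1 [this]
  abel

variable [CompleteSpace V]

/-- Inverse of `mtrans`. -/
def mtransInv (z : V) (r : ℝ) (w : V) (y : V) : V :=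
  letI : Nonempty V := ⟨0⟩
  Function.invFun (mtrans z r w) y

lemma mtrans_mtransInv {z : V} {r : ℝ} (hr : 0 < r) {w : V} (hw : dist w z < r) (y : V) :
    mtrans z r w (mtransInv z r w y) = y := by
  letI : Nonempty V := ⟨0⟩
  exact Function.invFun_eq (mtrans_surjective hr hw y)

lemma mtransInv_mtrans {z : V} {r : ℝ} (hr : 0 < r) {w : V} (hw : dist w z < r) (x : V) :
    mtransInv z r w (mtrans z r w x) = x := by
  letI : Nonempty V := ⟨0⟩
  exact Function.leftInverse_invFun (mtrans_injective hr hw) x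

lemma mtransInv_eq_of_far {z : V} {r : ℝ} (hr : 0 < r) {w : V} (hw : dist w z < r)
    {y : V} (h : 2*r ≤ dist y z) : mtransInv z r w y = y := by
  apply mtrans_injective hr hw
  rw [mtrans_mtransInv hr hw, mtrans_eq_of_far hr h]

lemma mtrans_dist_lt {z : V} {r : ℝ} (hr : 0 < r) {w : V} (hw : dist w z < r)
    {x : V} {s : ℝ} (h2 : 2*r ≤ s) (h : dist x z < s) : dist (mtrans z r w x) z < s := by
  rcases le_or_gt (2*r) (dist x z) with hd | hd
  · rw [mtrans_eq_of_far hr hd]; exact h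
  · have hb : bump z r x ≤ (2*r - dist x z)/r := by
      rcases bump_le (x := x) (z := z) hr with h' | h'
      · exact h'
      · rw [h']; exact div_nonneg (by linarith) hr.le
    have hzw : ‖z - w‖ < r := by rw [← dist_eq_norm, dist_comm]; exact hw
    have hd1 : dist (mtrans z r w x) x ≤ bump z r x * ‖z - w‖ := by
      rw [dist_eq_norm, mtrans]
      have e : x + bump z r x • (z - w) - x = bump z r x • (z - w) := by abel
      rw [e, norm_smul, Real.norm_eq_abs, abs_of_nonneg (bump_nonneg z r x)]
    have hpos : 0 < (2*r - dist x z)/r := div_pos (by linarith) hr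
    have hd2 : bump z r x * ‖z - w‖ < 2*r - dist x z := by
      calc bump z r x * ‖z - w‖ ≤ ((2*r - dist x z)/r) * ‖z - w‖ :=
            mul_le_mul_of_nonneg_right hb (norm_nonneg _)
        _ < ((2*r - dist x z)/r) * r := by
            rcases eq_or_lt_of_le (norm_nonneg (z - w)) with h0 | h0
            · rw [← h0]; simpa using mul_pos hpos hr
            · exact mul_lt_mul_of_pos_left hzw hpos
        _ = 2*r - dist x z := by field_simp
    calc dist (mtrans z r w x) z ≤ dist (mtrans z r w x) x + dist x z := dist_triangle _ _ _
      _ < (2*r - dist x z) + dist x z := by linarith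
      _ = 2*r := by ring
      _ ≤ s := h2

lemma mtransInv_dist_lt {z : V} {r : ℝ} (hr : 0 < r) {w : V} (hw : dist w z < r)
    {y : V} {s : ℝ} (h2 : 2*r ≤ s) (h : dist y z < s) : dist (mtransInv z r w y) z < s := by
  rcases le_or_gt (2*r) (dist (mtransInv z r w y) z) with hd | hd
  · have := mtrans_eq_of_far hr hd w
    rw [mtrans_mtransInv hr hw] at this
    rw [← this]; exact h
  · exact lt_of_lt_of_le hd h2

lemma dist_mtransInv_le {z : V} {r : ℝ} (hr : 0 < r) {w w' : V} (hw : dist w z < r)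
    (hw' : dist w' z < r) (y y' : V) :
    dist (mtransInv z r w y) (mtransInv z r w' y')
      ≤ (dist y y' + dist w w') / (1 - dist w z / r) := by
  set a := mtransInv z r w y
  set b := mtransInv z r w' y'
  have hL : 0 < 1 - dist w z / r := by
    have : dist w z / r < 1 := (div_lt_one hr).2 hw
    linarith
  have h1 : (1 - dist w z / r) * dist a b ≤ dist (mtrans z r w a) (mtrans z r w b) :=
    dist_le_dist_mtrans (z := z) hr w a b
  rw [mtrans_mtransInv hr hw] at h1
  have h2 : dist (mtrans z r w b) (mtrans z r w' b) ≤ dist w w' :=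
    dist_mtrans_mtrans_le (z := z) hr w w' b
  rw [mtrans_mtransInv hr hw'] at h2
  have h3 : dist y (mtrans z r w b) ≤ dist y y' + dist w w' := by
    calc dist y (mtrans z r w b) ≤ dist y y' + dist y' (mtrans z r w b) := dist_triangle _ _ _
      _ ≤ dist y y' + dist w w' := by
          have := dist_comm (mtrans z r w b) y' ▸ h2
          linarith [dist_comm y' (mtrans z r w b) ▸ h2]
  rw [le_div_iff₀ hL, mul_comm]
  exact le_trans h1 h3

lemma continuousOn_mtransInv (z : V) (r : ℝ) (hr : 0 < r) :
    ContinuousOn (fun p : V × V => mtransInv z r p.1 p.2) (Metric.ball z r ×ˢ Set.univ) := by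
  have hopen : IsOpen (Metric.ball z r ×ˢ (Set.univ : Set V)) :=
    Metric.isOpen_ball.prod isOpen_univ
  intro p₀ hp₀
  have hw₀ : dist p₀.1 z < r := by
    have := hp₀.1
    simpa [Metric.mem_ball] using this
  have hL : 0 < 1 - dist p₀.1 z / r := by
    have : dist p₀.1 z / r < 1 := (div_lt_one hr).2 hw₀
    linarith
  have key : Tendsto (fun p : V × V => dist (mtransInv z r p.1 p.2) (mtransInv z r p₀.1 p₀.2))
      (𝓝 p₀) (𝓝 0) := by
    apply squeeze_zero' (Filter.Eventually.of_forall fun p => dist_nonneg)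
    · filter_upwards [(Metric.isOpen_ball.preimage continuous_fst).mem_nhds
        (show p₀ ∈ (fun p : V × V => p.1) ⁻¹' Metric.ball z r from hw₀)] with p hp
      exact dist_mtransInv_le hr hp hw₀ p.2 p₀.2
    · have hcont : ContinuousAt (fun p : V × V =>
          (dist p.2 p₀.2 + dist p.1 p₀.1) / (1 - dist p.1 z / r)) p₀ := by
        apply ContinuousAt.div
        · fun_prop
        · fun_prop
        · exact ne_of_gt hL
      have h0 : (dist p₀.2 p₀.2 + dist p₀.1 p₀.1) / (1 - dist p₀.1 z / r) = 0 := by simp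
      simpa [ContinuousAt, h0] using hcont
  have : ContinuousAt (fun p : V × V => mtransInv z r p.1 p.2) p₀ :=
    tendsto_iff_dist_tendsto_zero.2 key
  exact this.continuousWithinAt

section Move

variable {M : Type*} [TopologicalSpace M] [T2Space M] [ProperSpace V]
variable (ψ : OpenPartialHomeomorph M V) (z : V) (r : ℝ)

/-- The open set on which the move is (possibly) non-trivial. -/
def Vset : Set M := ψ.source ∩ ψ ⁻¹' (Metric.ball z (3*r))

lemma isOpen_Vset : IsOpen (Vset ψ z r) :=
  ψ.continuousOn.isOpen_inter_preimage ψ.open_source Metric.isOpen_ball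

open Classical in
def move (w : V) (p : M) : M :=
  if p ∈ Vset ψ z r then ψ.symm (mtrans z r w (ψ p)) else p

open Classical in
def moveInv (w : V) (p : M) : M :=
  if p ∈ Vset ψ z r then ψ.symm (mtransInv z r w (ψ p)) else p

variable {ψ z r}

lemma symm_mem_Vset (hr : 0 < r) (h3 : Metric.closedBall z (3*r) ⊆ ψ.target)
    {y : V} (hy : y ∈ Metric.ball z (3*r)) : ψ.symm y ∈ Vset ψ z r := by
  have hyt : y ∈ ψ.target := h3 (Metric.ball_subset_closedBall hy)
  exact ⟨ψ.map_target hyt, by rw [Set.mem_preimage, ψ.right_inv hyt]; exact hy⟩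

lemma move_eq_of_not_mem {w : V} {p : M} (hp : p ∉ Vset ψ z r) : move ψ z r w p = p :=
  if_neg hp

lemma moveInv_eq_of_not_mem {w : V} {p : M} (hp : p ∉ Vset ψ z r) : moveInv ψ z r w p = p :=
  if_neg hp

lemma move_mem_image (hr : 0 < r) (h3 : Metric.closedBall z (3*r) ⊆ ψ.target)
    {w : V} (hw : dist w z < r) {p : M} (hp : p ∈ Vset ψ z r) :
    move ψ z r w p ∈ ψ.symm '' Metric.ball z (3*r) := by
  rw [move, if_pos hp]
  exact ⟨mtrans z r w (ψ p), mtrans_dist_lt hr hw (by linarith) hp.2, rfl⟩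

lemma moveInv_mem_image (hr : 0 < r) (h3 : Metric.closedBall z (3*r) ⊆ ψ.target)
    {w : V} (hw : dist w z < r) {p : M} (hp : p ∈ Vset ψ z r) :
    moveInv ψ z r w p ∈ ψ.symm '' Metric.ball z (3*r) := by
  rw [moveInv, if_pos hp]
  exact ⟨mtransInv z r w (ψ p), mtransInv_dist_lt hr hw (by linarith) hp.2, rfl⟩

lemma moveInv_move (hr : 0 < r) (h3 : Metric.closedBall z (3*r) ⊆ ψ.target)
    {w : V} (hw : dist w z < r) (p : M) : moveInv ψ z r w (move ψ z r w p) = p := by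
  by_cases hp : p ∈ Vset ψ z r
  · have h1 : mtrans z r w (ψ p) ∈ Metric.ball z (3*r) :=
      mtrans_dist_lt hr hw (by linarith) hp.2
    have h1t : mtrans z r w (ψ p) ∈ ψ.target := h3 (Metric.ball_subset_closedBall h1)
    have hmem : move ψ z r w p ∈ Vset ψ z r := by
      rw [move, if_pos hp]; exact symm_mem_Vset hr h3 h1
    rw [move, if_pos hp] at hmem ⊢
    rw [moveInv, if_pos hmem, ψ.right_inv h1t, mtransInv_mtrans hr hw, ψ.left_inv hp.1]
  · rw [move, if_neg hp, moveInv, if_neg hp]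

lemma move_moveInv (hr : 0 < r) (h3 : Metric.closedBall z (3*r) ⊆ ψ.target)
    {w : V} (hw : dist w z < r) (p : M) : move ψ z r w (moveInv ψ z r w p) = p := by
  by_cases hp : p ∈ Vset ψ z r
  · have h1 : mtransInv z r w (ψ p) ∈ Metric.ball z (3*r) :=
      mtransInv_dist_lt hr hw (by linarith) hp.2
    have h1t : mtransInv z r w (ψ p) ∈ ψ.target := h3 (Metric.ball_subset_closedBall h1)
    have hmem : moveInv ψ z r w p ∈ Vset ψ z r := by
      rw [moveInv, if_pos hp]; exact symm_mem_Vset hr h3 h1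
    rw [moveInv, if_pos hp] at hmem ⊢
    rw [move, if_pos hmem, ψ.right_inv h1t, mtrans_mtransInv hr hw, ψ.left_inv hp.1]
  · rw [moveInv, if_neg hp, move, if_neg hp]

lemma move_center (hr : 0 < r) {p : M} (hp : p ∈ ψ.source)
    (hd : dist (ψ p) z < r) : move ψ z r (ψ p) p = ψ.symm z := by
  have hpV : p ∈ Vset ψ z r := ⟨hp, by rw [Set.mem_preimage, Metric.mem_ball]; linarith⟩
  rw [move, if_pos hpV, mtrans_self hr hd]

lemma not_mem_K_of_not_mem_Vset (hr : 0 < r) (h3 : Metric.closedBall z (3*r) ⊆ ψ.target)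
    {p : M} (hp : p ∉ Vset ψ z r) : p ∉ ψ.symm '' Metric.closedBall z (2*r) := by
  intro ⟨y, hy, hyp⟩
  apply hp
  rw [← hyp]
  exact symm_mem_Vset hr h3 (Metric.mem_ball.2 (lt_of_le_of_lt (Metric.mem_closedBall.1 hy) (by linarith)))

lemma move_eq_snd_of_not_mem_K (hr : 0 < r) (h3 : Metric.closedBall z (3*r) ⊆ ψ.target)
    {w : V} {p : M} (hp : p ∉ ψ.symm '' Metric.closedBall z (2*r)) : move ψ z r w p = p := by
  by_cases hpV : p ∈ Vset ψ z r
  · have hfar : 2*r ≤ dist (ψ p) z := by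
      by_contra hc
      push_neg at hc
      apply hp
      refine ⟨ψ p, Metric.mem_closedBall.2 hc.le, ψ.left_inv hpV.1⟩
    rw [move, if_pos hpV, mtrans_eq_of_far hr hfar, ψ.left_inv hpV.1]
  · exact if_neg hpV

lemma moveInv_eq_snd_of_not_mem_K (hr : 0 < r) (h3 : Metric.closedBall z (3*r) ⊆ ψ.target)
    {w : V} (hw : dist w z < r) {p : M} (hp : p ∉ ψ.symm '' Metric.closedBall z (2*r)) :
    moveInv ψ z r w p = p := by
  by_cases hpV : p ∈ Vset ψ z r
  · have hfar : 2*r ≤ dist (ψ p) z := by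
      by_contra hc
      push_neg at hc
      apply hp
      refine ⟨ψ p, Metric.mem_closedBall.2 hc.le, ψ.left_inv hpV.1⟩
    rw [moveInv, if_pos hpV, mtransInv_eq_of_far hr hw hfar, ψ.left_inv hpV.1]
  · exact if_neg hpV

lemma isCompact_K (hr : 0 < r) (h3 : Metric.closedBall z (3*r) ⊆ ψ.target) :
    IsCompact (ψ.symm '' Metric.closedBall z (2*r)) := by
  apply (isCompact_closedBall z (2*r)).image_of_continuousOn
  apply ψ.symm.continuousOn.mono
  rw [ψ.symm_source]
  exact (Metric.closedBall_subset_closedBall (by linarith)).trans h3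

lemma continuousOn_move (hr : 0 < r) (h3 : Metric.closedBall z (3*r) ⊆ ψ.target) :
    ContinuousOn (fun q : V × M => move ψ z r q.1 q.2)
      (Metric.ball z r ×ˢ (Set.univ : Set M)) := by
  apply continuousOn_of_forall_continuousAt
  rintro ⟨w₀, p₀⟩ ⟨hw₀, -⟩
  simp only [Metric.mem_ball] at hw₀
  by_cases hp₀ : p₀ ∈ Vset ψ z r
  · have hg : ContinuousAt (fun q : V × M => ψ.symm (mtrans z r q.1 (ψ q.2))) (w₀, p₀) := by
      have c1 : ContinuousAt (fun q : V × M => (q.1, ψ q.2)) (w₀, p₀) :=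
        continuousAt_fst.prodMk ((ψ.continuousAt hp₀.1).comp continuousAt_snd)
      have c2 : ContinuousAt ((fun p : V × V => mtrans z r p.1 p.2) ∘
          (fun q : V × M => (q.1, ψ q.2))) (w₀, p₀) :=
        ContinuousAt.comp (f := fun q : V × M => (q.1, ψ q.2))
          ((continuous_mtrans z r).continuousAt) c1
      have hval : mtrans z r w₀ (ψ p₀) ∈ ψ.target :=
        h3 (Metric.ball_subset_closedBall (mtrans_dist_lt hr hw₀ (by linarith) hp₀.2))
      have c3 : ContinuousAt (fun y : V => ψ.symm y) (mtrans z r w₀ (ψ p₀)) :=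
        ψ.symm.continuousAt (by rwa [ψ.symm_source])
      exact ContinuousAt.comp (f := (fun p : V × V => mtrans z r p.1 p.2) ∘
          (fun q : V × M => (q.1, ψ q.2))) c3 c2
    apply hg.congr
    filter_upwards [((isOpen_Vset ψ z r).preimage continuous_snd).mem_nhds hp₀] with q hq
    simp only [Set.mem_preimage] at hq
    rw [move, if_pos hq]
  · have hpK := not_mem_K_of_not_mem_Vset hr h3 hp₀
    have hKopen : IsOpen ((ψ.symm '' Metric.closedBall z (2*r))ᶜ) :=
      (isCompact_K hr h3).isClosed.isOpen_compl
    apply continuousAt_snd.congr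
    filter_upwards [(hKopen.preimage continuous_snd).mem_nhds hpK] with q hq
    exact (move_eq_snd_of_not_mem_K hr h3 hq).symm

lemma continuousOn_moveInv (hr : 0 < r) (h3 : Metric.closedBall z (3*r) ⊆ ψ.target) :
    ContinuousOn (fun q : V × M => moveInv ψ z r q.1 q.2)
      (Metric.ball z r ×ˢ (Set.univ : Set M)) := by
  apply continuousOn_of_forall_continuousAt
  rintro ⟨w₀, p₀⟩ ⟨hw₀, -⟩
  simp only [Metric.mem_ball] at hw₀
  by_cases hp₀ : p₀ ∈ Vset ψ z r
  · have hg : ContinuousAt (fun q : V × M => ψ.symm (mtransInv z r q.1 (ψ q.2))) (w₀, p₀) := by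
      have c1 : ContinuousAt (fun q : V × M => (q.1, ψ q.2)) (w₀, p₀) :=
        continuousAt_fst.prodMk ((ψ.continuousAt hp₀.1).comp continuousAt_snd)
      have c2 : ContinuousAt (fun q : V × V => mtransInv z r q.1 q.2) (w₀, ψ p₀) :=
        (continuousOn_mtransInv z r hr).continuousAt
          ((Metric.isOpen_ball.prod isOpen_univ).mem_nhds ⟨Metric.mem_ball.2 hw₀, trivial⟩)
      have c3 : ContinuousAt ((fun p : V × V => mtransInv z r p.1 p.2) ∘
          (fun q : V × M => (q.1, ψ q.2))) (w₀, p₀) :=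
        ContinuousAt.comp (f := fun q : V × M => (q.1, ψ q.2)) c2 c1
      have hval : mtransInv z r w₀ (ψ p₀) ∈ ψ.target :=
        h3 (Metric.ball_subset_closedBall (mtransInv_dist_lt hr hw₀ (by linarith) hp₀.2))
      have c4 : ContinuousAt (fun y : V => ψ.symm y) (mtransInv z r w₀ (ψ p₀)) :=
        ψ.symm.continuousAt (by rwa [ψ.symm_source])
      exact ContinuousAt.comp (f := (fun p : V × V => mtransInv z r p.1 p.2) ∘
          (fun q : V × M => (q.1, ψ q.2))) c4 c3
    apply hg.congr
    filter_upwards [((isOpen_Vset ψ z r).preimage continuous_snd).mem_nhds hp₀] with q hq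
    simp only [Set.mem_preimage] at hq
    rw [moveInv, if_pos hq]
  · have hpK := not_mem_K_of_not_mem_Vset hr h3 hp₀
    have hKopen : IsOpen ((ψ.symm '' Metric.closedBall z (2*r))ᶜ) :=
      (isCompact_K hr h3).isClosed.isOpen_compl
    apply continuousAt_snd.congr
    filter_upwards [(hKopen.preimage continuous_snd).mem_nhds hpK,
      ((Metric.isOpen_ball (x := z) (ε := r)).preimage continuous_fst).mem_nhds
        (Metric.mem_ball.2 hw₀)] with q hq hq'
    exact (moveInv_eq_snd_of_not_mem_K hr h3 (Metric.mem_ball.1 hq') hq).symm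

end Move

section Iter

variable {M : Type*}

/-- Iterated composition `f (m-1) ∘ ... ∘ f 0`. -/
def iterMoves (f : ℕ → M → M) : ℕ → M → M
  | 0 => id
  | m+1 => f m ∘ iterMoves f m

/-- Iterated composition in the reverse order. -/
def iterMovesInv (g : ℕ → M → M) : ℕ → M → M
  | 0 => id
  | m+1 => iterMovesInv g m ∘ g m

lemma iterMovesInv_iterMoves {f g : ℕ → M → M} (h : ∀ m p, g m (f m p) = p) :
    ∀ m p, iterMovesInv g m (iterMoves f m p) = p := by
  intro m
  induction m with
  | zero => intro p; rfl
  | succ m ih =>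
    intro p
    show iterMovesInv g m (g m (f m (iterMoves f m p))) = p
    rw [h m, ih]

lemma iterMoves_iterMovesInv {f g : ℕ → M → M} (h : ∀ m p, f m (g m p) = p) :
    ∀ m p, iterMoves f m (iterMovesInv g m p) = p := by
  intro m
  induction m with
  | zero => intro p; rfl
  | succ m ih =>
    intro p
    show f m (iterMoves f m (iterMovesInv g m (g m p))) = p
    rw [ih (g m p), h m p]

lemma iterMoves_mem {f : ℕ → M → M} {S : Set M} (h : ∀ m p, p ∈ S → f m p ∈ S) :
    ∀ m p, p ∈ S → iterMoves f m p ∈ S := by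
  intro m
  induction m with
  | zero => intro p hp; exact hp
  | succ m ih => intro p hp; exact h m _ (ih p hp)

lemma iterMovesInv_mem {g : ℕ → M → M} {S : Set M} (h : ∀ m p, p ∈ S → g m p ∈ S) :
    ∀ m p, p ∈ S → iterMovesInv g m p ∈ S := by
  intro m
  induction m with
  | zero => intro p hp; exact hp
  | succ m ih => intro p hp; exact ih _ (h m p hp)

lemma continuousOn_iterMoves {X : Type*} [TopologicalSpace X] [TopologicalSpace M]
    (F : ℕ → X → M → M) (S : Set X)
    (hF : ∀ m, ContinuousOn (fun q : X × M => F m q.1 q.2) (S ×ˢ (Set.univ : Set M))) :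
    ∀ m, ContinuousOn (fun q : X × M => iterMoves (fun j => F j q.1) m q.2)
      (S ×ˢ (Set.univ : Set M)) := by
  intro m
  induction m with
  | zero => exact continuous_snd.continuousOn
  | succ m ih =>
    have hmap : Set.MapsTo (fun q : X × M => (q.1, iterMoves (fun j => F j q.1) m q.2))
        (S ×ˢ (Set.univ : Set M)) (S ×ˢ (Set.univ : Set M)) :=
      fun q hq => ⟨(Set.mem_prod.1 hq).1, trivial⟩
    have hc := ContinuousOn.comp (hF m) ((continuous_fst.continuousOn).prodMk ih) hmap
    have : (fun q : X × M => iterMoves (fun j => F j q.1) (m+1) q.2)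
        = (fun q : X × M => F m q.1 q.2) ∘
          (fun q : X × M => (q.1, iterMoves (fun j => F j q.1) m q.2)) := rfl
    rw [this]
    exact hc

lemma continuousOn_iterMovesInv {X : Type*} [TopologicalSpace X] [TopologicalSpace M]
    (G : ℕ → X → M → M) (S : Set X)
    (hG : ∀ m, ContinuousOn (fun q : X × M => G m q.1 q.2) (S ×ˢ (Set.univ : Set M))) :
    ∀ m, ContinuousOn (fun q : X × M => iterMovesInv (fun j => G j q.1) m q.2)
      (S ×ˢ (Set.univ : Set M)) := by
  intro m
  induction m with
  | zero => exact continuous_snd.continuousOn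
  | succ m ih =>
    have hmap : Set.MapsTo (fun q : X × M => (q.1, G m q.1 q.2))
        (S ×ˢ (Set.univ : Set M)) (S ×ˢ (Set.univ : Set M)) :=
      fun q hq => ⟨(Set.mem_prod.1 hq).1, trivial⟩
    have hc := ContinuousOn.comp ih ((continuous_fst.continuousOn).prodMk (hG m)) hmap
    have : (fun q : X × M => iterMovesInv (fun j => G j q.1) (m+1) q.2)
        = (fun q : X × M => iterMovesInv (fun j => G j q.1) m q.2) ∘
          (fun q : X × M => (q.1, G m q.1 q.2)) := rfl
    rw [this]
    exact hc

end Iter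

end MoveAux

section MainProof
open MoveAux

set_option maxHeartbeats 800000 in
theorem stmt4 {n : ℕ} (A : Type) [TopologicalSpace A] [T2Space A] [SecondCountableTopology A] [Nonempty A]
    [ChartedSpace (EuclideanSpace ℝ (Fin n)) A] [IsManifold (𝓡 n) ((⊤ : ℕ∞) : WithTop ℕ∞) A]
    (k : ℕ) (hk : 1 ≤ k) (q : ConfigJ A k) :
    ∃ U : Set (ConfigJ A k), IsOpen U ∧ q ∈ U ∧
      ∃ h : {x : ConfigJ A (k + 1) // configJProjLE A (Nat.le_succ k) x ∈ U} ≃ₜ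
          (U × {y : A × ℝ // |y.2| ≤ (k : ℝ) ∧ ∀ i : Fin k, y ≠ q.1 i}),
        ∀ x, ((h x).1 : ConfigJ A k) = configJProjLE A (Nat.le_succ k) x.1 := by
  classical
  haveI : LocallyCompactSpace A := by
    haveI := (𝓡 n).locallyCompactSpace
    exact ChartedSpace.locallyCompactSpace (EuclideanSpace ℝ (Fin n)) A
  haveI : TopologicalSpace.MetrizableSpace A := Manifold.metrizableSpace (𝓡 n) A
  letI : MetricSpace (A × ℝ) := TopologicalSpace.metrizableSpaceMetric (A × ℝ)
  -- charts around the base points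
  let ψ : Fin k → OpenPartialHomeomorph (A × ℝ) (EuclideanSpace ℝ (Fin n) × ℝ) :=
    fun i => (chartAt (EuclideanSpace ℝ (Fin n)) (q.1 i).1).prod (OpenPartialHomeomorph.refl ℝ)
  let z : Fin k → EuclideanSpace ℝ (Fin n) × ℝ := fun i => ψ i (q.1 i)
  have hqsource : ∀ i, q.1 i ∈ (ψ i).source := by
    intro i
    show q.1 i ∈ (chartAt (EuclideanSpace ℝ (Fin n)) (q.1 i).1).source ×ˢ Set.univ
    exact ⟨mem_chart_source _ _, trivial⟩
  have hsymmz : ∀ i, (ψ i).symm (z i) = q.1 i := fun i => (ψ i).left_inv (hqsource i)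
  have hsnd : ∀ i (y : EuclideanSpace ℝ (Fin n) × ℝ), (((ψ i).symm) y).2 = y.2 :=
    fun i y => rfl
  have hzsnd : ∀ i, (z i).2 = (q.1 i).2 := fun i => rfl
  -- separation constant
  have hnek : Nonempty (Fin k) := ⟨⟨0, hk⟩⟩
  obtain ⟨δ, hδpos, hδ⟩ :
      ∃ δ : ℝ, 0 < δ ∧ ∀ i j : Fin k, i ≠ j → 2*δ ≤ dist (q.1 i) (q.1 j) := by
    have hneu : (Finset.univ : Finset (Fin k × Fin k)).Nonempty :=
      ⟨(⟨0, hk⟩, ⟨0, hk⟩), Finset.mem_univ _⟩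
    set D : Fin k × Fin k → ℝ :=
      fun ij => if ij.1 = ij.2 then 1 else dist (q.1 ij.1) (q.1 ij.2) / 2 with hD
    refine ⟨Finset.univ.inf' hneu D, ?_, ?_⟩
    · rw [Finset.lt_inf'_iff]
      intro ij _
      rw [hD]
      dsimp only
      split
      · norm_num
      · have : q.1 ij.1 ≠ q.1 ij.2 := fun hc => ‹ij.1 ≠ ij.2› (q.2.1 hc)
        have := dist_pos.2 this
        linarith
    · intro i j hij
      have h1 : Finset.univ.inf' hneu D ≤ D (i, j) := Finset.inf'_le _ (Finset.mem_univ _)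
      have h2 : D (i, j) = dist (q.1 i) (q.1 j) / 2 := by simp [hD, hij]
      rw [h2] at h1
      linarith
  -- radii
  have hrex : ∀ i : Fin k, ∃ r : ℝ, 0 < r ∧ r ≤ 1/8 ∧
      Metric.closedBall (z i) (3*r) ⊆ (ψ i).target ∧
      ∀ y ∈ Metric.closedBall (z i) (3*r), dist ((ψ i).symm y) (q.1 i) < δ := by
    intro i
    have hzt : z i ∈ (ψ i).target := (ψ i).map_source (hqsource i)
    obtain ⟨ρ₁, hρ₁, hball₁⟩ := Metric.isOpen_iff.1 (ψ i).open_target (z i) hzt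
    have hcont : ContinuousAt ((ψ i).symm) (z i) :=
      (ψ i).symm.continuousAt (by rwa [(ψ i).symm_source])
    have hpre : ((ψ i).symm) ⁻¹' Metric.ball (q.1 i) δ ∈ nhds (z i) := by
      apply hcont.preimage_mem_nhds
      rw [hsymmz i]
      exact Metric.ball_mem_nhds _ hδpos
    obtain ⟨ρ₂, hρ₂, hball₂⟩ := Metric.mem_nhds_iff.1 hpre
    refine ⟨min (1/8) (min ρ₁ ρ₂ / 4), ?_, ?_, ?_, ?_⟩
    · have : 0 < min ρ₁ ρ₂ := lt_min hρ₁ hρ₂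
      positivity
    · exact min_le_left _ _
    · intro y hy
      apply hball₁
      rw [Metric.mem_ball]
      have h1 : dist y (z i) ≤ 3 * min (1/8) (min ρ₁ ρ₂ / 4) := hy
      have h2 : min (1/8) (min ρ₁ ρ₂ / 4) ≤ min ρ₁ ρ₂ / 4 := min_le_right _ _
      have h3 : min ρ₁ ρ₂ ≤ ρ₁ := min_le_left _ _
      have h4 : 0 < min ρ₁ ρ₂ := lt_min hρ₁ hρ₂
      linarith
    · intro y hy
      have : y ∈ Metric.ball (z i) ρ₂ := by
        rw [Metric.mem_ball]
        have h1 : dist y (z i) ≤ 3 * min (1/8) (min ρ₁ ρ₂ / 4) := hy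
        have h2 : min (1/8) (min ρ₁ ρ₂ / 4) ≤ min ρ₁ ρ₂ / 4 := min_le_right _ _
        have h3 : min ρ₁ ρ₂ ≤ ρ₂ := min_le_right _ _
        have h4 : 0 < min ρ₁ ρ₂ := lt_min hρ₁ hρ₂
        linarith
      exact Metric.mem_ball.1 (hball₂ this)
  choose r hr0 hr8 hrt hrδ using hrex
  -- derived sets
  have hVsub : ∀ i, Vset (ψ i) (z i) (r i) ⊆ Metric.ball (q.1 i) δ := by
    intro i p hp
    have h1 : (ψ i) p ∈ Metric.closedBall (z i) (3 * r i) :=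
      Metric.ball_subset_closedBall hp.2
    have h2 := hrδ i _ h1
    rw [(ψ i).left_inv hp.1] at h2
    exact Metric.mem_ball.2 h2
  have hdisj : ∀ i j : Fin k, i ≠ j → ∀ p, p ∈ Vset (ψ i) (z i) (r i) →
      p ∉ Vset (ψ j) (z j) (r j) := by
    intro i j hij p hpi hpj
    have h1 := Metric.mem_ball.1 (hVsub i hpi)
    have h2 := Metric.mem_ball.1 (hVsub j hpj)
    have h3 := hδ i j hij
    have h4 := dist_triangle (q.1 i) p (q.1 j)
    rw [dist_comm (q.1 i) p] at h4
    linarith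
  have hqV : ∀ i, q.1 i ∈ Vset (ψ i) (z i) (r i) := by
    intro i
    refine ⟨hqsource i, ?_⟩
    show (ψ i) (q.1 i) ∈ Metric.ball (z i) (3 * r i)
    exact Metric.mem_ball_self (by have := hr0 i; linarith)
  -- the strip bound
  have hstrip : ∀ i, ∀ y ∈ Metric.ball (z i) (3 * r i), |(((ψ i).symm) y).2| ≤ (k:ℝ) := by
    intro i y hy
    have h1 : dist y.2 (z i).2 ≤ dist y (z i) := by
      rw [Prod.dist_eq]; exact le_max_right _ _
    have h2 : dist y (z i) < 3 * r i := Metric.mem_ball.1 hy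
    have h3 : |y.2 - (z i).2| < 3 * r i := by
      rw [← Real.dist_eq]; exact lt_of_le_of_lt h1 h2
    have h4 : |(q.1 i).2| ≤ (i.val : ℝ) := q.2.2 i
    have h5 : (i.val : ℝ) + 1 ≤ (k : ℝ) := by exact_mod_cast i.isLt
    have h6 := hr8 i
    rw [hsnd i y]
    rw [hzsnd i] at h3
    have := abs_sub_abs_le_abs_sub y.2 (q.1 i).2
    linarith [abs_sub_abs_le_abs_sub y.2 (q.1 i).2]
  -- the open sets defining U
  set O : Fin k → Set (A × ℝ) :=
    fun i => (ψ i).source ∩ (ψ i) ⁻¹' Metric.ball (z i) (r i) with hOdef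
  have hOsub : ∀ i, O i ⊆ Vset (ψ i) (z i) (r i) := by
    intro i p hp
    refine ⟨hp.1, ?_⟩
    have := Metric.mem_ball.1 hp.2
    show (ψ i) p ∈ Metric.ball (z i) (3 * r i)
    rw [Metric.mem_ball]
    have := hr0 i
    linarith [Metric.mem_ball.1 hp.2]
  set Sx : Set (Fin k → A × ℝ) := {xs | ∀ i, xs i ∈ O i} with hSxdef
  have hw : ∀ xs ∈ Sx, ∀ i, dist ((ψ i) (xs i)) (z i) < r i := by
    intro xs hxs i
    exact Metric.mem_ball.1 (hxs i).2
  -- the moving families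
  set FF : (Fin k → A × ℝ) → ℕ → (A × ℝ) → (A × ℝ) := fun xs m p =>
    if h : m < k then move (ψ ⟨m,h⟩) (z ⟨m,h⟩) (r ⟨m,h⟩) ((ψ ⟨m,h⟩) (xs ⟨m,h⟩)) p else p
    with hFFdef
  set GG : (Fin k → A × ℝ) → ℕ → (A × ℝ) → (A × ℝ) := fun xs m p =>
    if h : m < k then moveInv (ψ ⟨m,h⟩) (z ⟨m,h⟩) (r ⟨m,h⟩) ((ψ ⟨m,h⟩) (xs ⟨m,h⟩)) p else p
    with hGGdef
  have hGF : ∀ xs ∈ Sx, ∀ m p, GG xs m (FF xs m p) = p := by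
    intro xs hxs m p
    by_cases h : m < k
    · simp only [hFFdef, hGGdef, dif_pos h]
      exact moveInv_move (hr0 _) (hrt _) (hw xs hxs _) p
    · simp only [hFFdef, hGGdef, dif_neg h]
  have hFG : ∀ xs ∈ Sx, ∀ m p, FF xs m (GG xs m p) = p := by
    intro xs hxs m p
    by_cases h : m < k
    · simp only [hFFdef, hGGdef, dif_pos h]
      exact move_moveInv (hr0 _) (hrt _) (hw xs hxs _) p
    · simp only [hFFdef, hGGdef, dif_neg h]
  have hΘ'Θ : ∀ xs ∈ Sx, ∀ p, iterMovesInv (GG xs) k (iterMoves (FF xs) k p) = p :=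
    fun xs hxs => iterMovesInv_iterMoves (hGF xs hxs) k
  have hΘΘ' : ∀ xs ∈ Sx, ∀ p, iterMoves (FF xs) k (iterMovesInv (GG xs) k p) = p :=
    fun xs hxs => iterMoves_iterMovesInv (hFG xs hxs) k
  -- the moving map sends the marked points to the base configuration
  have hΘfix : ∀ xs ∈ Sx, ∀ i : Fin k, iterMoves (FF xs) k (xs i) = q.1 i := by
    intro xs hxs i
    have key : ∀ m, m ≤ k →
        iterMoves (FF xs) m (xs i) = if i.val < m then q.1 i else xs i := by
      intro m
      induction m with
      | zero => intro _; simp [iterMoves]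
      | succ m ih =>
        intro hm1
        have hmk : m < k := hm1
        have hiter := ih (Nat.le_of_succ_le hm1)
        show FF xs m (iterMoves (FF xs) m (xs i)) = _
        rw [hiter]
        rcases lt_trichotomy i.val m with hlt | heq | hgt
        · rw [if_pos hlt, if_pos (by omega)]
          simp only [hFFdef, dif_pos hmk]
          exact move_eq_of_not_mem
            (hdisj i (⟨m, hmk⟩ : Fin k) (Fin.ne_of_val_ne (show (i:ℕ) ≠ m by omega)) (q.1 i) (hqV i))
        · have hieq : i = (⟨m, hmk⟩ : Fin k) := Fin.ext heq
          rw [if_neg (by omega), if_pos (by omega)]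
          simp only [hFFdef, dif_pos hmk]
          rw [← hieq]
          rw [move_center (hr0 i) (hxs i).1 (hw xs hxs i)]
          exact hsymmz i
        · rw [if_neg (by omega), if_neg (by omega)]
          simp only [hFFdef, dif_pos hmk]
          apply move_eq_of_not_mem
          apply hdisj i (⟨m, hmk⟩ : Fin k) (Fin.ne_of_val_ne (show (i:ℕ) ≠ m by omega))
          exact hOsub i (hxs i)
    have := key k le_rfl
    rw [this, if_pos i.isLt]
  -- the strip is preserved
  set SS : Set (A × ℝ) := {p | |p.2| ≤ (k:ℝ)} with hSSdef
  have hSF : ∀ xs ∈ Sx, ∀ m p, p ∈ SS → FF xs m p ∈ SS := by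
    intro xs hxs m p hp
    by_cases h : m < k
    · simp only [hFFdef, dif_pos h]
      by_cases hpV : p ∈ Vset (ψ ⟨m,h⟩) (z ⟨m,h⟩) (r ⟨m,h⟩)
      · obtain ⟨y, hy, hyp⟩ := move_mem_image (hr0 _) (hrt _) (hw xs hxs _) hpV
        rw [← hyp]
        exact hstrip _ y hy
      · rw [move_eq_of_not_mem hpV]; exact hp
    · simp only [hFFdef, dif_neg h]; exact hp
  have hSG : ∀ xs ∈ Sx, ∀ m p, p ∈ SS → GG xs m p ∈ SS := by
    intro xs hxs m p hp
    by_cases h : m < k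
    · simp only [hGGdef, dif_pos h]
      by_cases hpV : p ∈ Vset (ψ ⟨m,h⟩) (z ⟨m,h⟩) (r ⟨m,h⟩)
      · obtain ⟨y, hy, hyp⟩ := moveInv_mem_image (hr0 _) (hrt _) (hw xs hxs _) hpV
        rw [← hyp]
        exact hstrip _ y hy
      · rw [moveInv_eq_of_not_mem hpV]; exact hp
    · simp only [hGGdef, dif_neg h]; exact hp
  have hSΘ : ∀ xs ∈ Sx, ∀ p, p ∈ SS → iterMoves (FF xs) k p ∈ SS :=
    fun xs hxs => iterMoves_mem (hSF xs hxs) k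
  have hSΘ' : ∀ xs ∈ Sx, ∀ p, p ∈ SS → iterMovesInv (GG xs) k p ∈ SS :=
    fun xs hxs => iterMovesInv_mem (hSG xs hxs) k
  -- the set U
  refine ⟨{x : ConfigJ A k | ∀ i, x.1 i ∈ O i}, ?_, ?_, ?_⟩
  · have heq : {x : ConfigJ A k | ∀ i, x.1 i ∈ O i}
        = ⋂ i, (fun x : ConfigJ A k => x.1 i) ⁻¹' O i := by
      ext x; simp [Set.mem_iInter]
    rw [heq]
    apply isOpen_iInter_of_finite
    intro i
    have hOopen : IsOpen (O i) :=
      (ψ i).continuousOn.isOpen_inter_preimage (ψ i).open_source Metric.isOpen_ball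
    exact hOopen.preimage ((continuous_apply i).comp continuous_subtype_val)
  · intro i
    refine ⟨hqsource i, ?_⟩
    show (ψ i) (q.1 i) ∈ Metric.ball (z i) (r i)
    exact Metric.mem_ball_self (hr0 i)
  -- the homeomorphism
  refine ⟨⟨⟨fun x =>
      (⟨configJProjLE A (Nat.le_succ k) x.1, x.2⟩,
       ⟨iterMoves (FF (fun i => x.1.1 (Fin.castLE (Nat.le_succ k) i))) k (x.1.1 (Fin.last k)),
        by
          constructor
          · exact hSΘ _ (fun i => x.2 i) _ (by simpa [hSSdef] using x.1.2.2 (Fin.last k))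
          · intro i hcontra
            set xs : Fin k → A × ℝ := fun i => x.1.1 (Fin.castLE (Nat.le_succ k) i) with hxsdef
            have hxs : xs ∈ Sx := fun i => x.2 i
            have h1 := congrArg (iterMovesInv (GG xs) k) hcontra
            rw [hΘ'Θ xs hxs] at h1
            have h2 := hΘfix xs hxs i
            rw [← h2, hΘ'Θ xs hxs] at h1
            have h3 := x.1.2.1 h1
            have h4 := congrArg Fin.val h3
            simp only [Fin.val_last, Fin.coe_castLE] at h4
            omega⟩),
    fun p =>
      ⟨⟨Fin.snoc p.1.1.1 (iterMovesInv (GG p.1.1.1) k p.2.1),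
        by
          have hxs : p.1.1.1 ∈ Sx := fun i => p.1.2 i
          have hnew : ∀ i : Fin k, iterMovesInv (GG p.1.1.1) k p.2.1 ≠ p.1.1.1 i := by
            intro i heq
            have h1 := congrArg (iterMoves (FF p.1.1.1) k) heq
            rw [hΘΘ' _ hxs, hΘfix _ hxs i] at h1
            exact p.2.2.2 i h1
          constructor
          · intro a b hab
            induction a using Fin.lastCases with
            | last =>
              induction b using Fin.lastCases with
              | last => rfl
              | cast j =>
                rw [Fin.snoc_last, Fin.snoc_castSucc] at hab
                exact absurd hab (hnew j)
            | cast j =>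
              induction b using Fin.lastCases with
              | last =>
                rw [Fin.snoc_last, Fin.snoc_castSucc] at hab
                exact absurd hab.symm (hnew j)
              | cast j' =>
                rw [Fin.snoc_castSucc, Fin.snoc_castSucc] at hab
                exact congrArg Fin.castSucc (p.1.1.2.1 hab)
          · intro j
            induction j using Fin.lastCases with
            | last =>
              rw [Fin.snoc_last]
              have := hSΘ' _ hxs p.2.1 p.2.2.1
              simpa [hSSdef] using this
            | cast i =>
              rw [Fin.snoc_castSucc]
              simpa using p.1.1.2.2 i⟩,
        by
          intro i
          show Fin.snoc (α := fun _ : Fin (k+1) => A × ℝ) p.1.1.1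
            (iterMovesInv (GG p.1.1.1) k p.2.1) (Fin.castLE (Nat.le_succ k) i) ∈ O i
          rw [show Fin.castLE (Nat.le_succ k) i = Fin.castSucc i from rfl, Fin.snoc_castSucc]
          exact p.1.2 i⟩,
    ?_, ?_⟩, ?_, ?_⟩, fun x => rfl⟩
  · -- left inverse
    intro x
    apply Subtype.ext
    apply Subtype.ext
    funext j
    induction j using Fin.lastCases with
    | last =>
      dsimp only
      rw [Fin.snoc_last]
      exact hΘ'Θ (fun i => x.1.1 (Fin.castLE (Nat.le_succ k) i)) (fun i => x.2 i) _
    | cast i =>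
      dsimp only
      rw [Fin.snoc_castSucc]
      rfl
  · -- right inverse
    intro p
    have hxs : p.1.1.1 ∈ Sx := fun i => p.1.2 i
    have hfun : (fun i : Fin k =>
        Fin.snoc (α := fun _ : Fin (k+1) => A × ℝ) p.1.1.1
          (iterMovesInv (GG p.1.1.1) k p.2.1) (Fin.castLE (Nat.le_succ k) i))
        = p.1.1.1 := by
      funext i
      rw [show Fin.castLE (Nat.le_succ k) i = Fin.castSucc i from rfl, Fin.snoc_castSucc]
    refine Prod.ext ?_ ?_
    · apply Subtype.ext
      apply Subtype.ext
      funext i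
      show Fin.snoc (α := fun _ : Fin (k+1) => A × ℝ) p.1.1.1
        (iterMovesInv (GG p.1.1.1) k p.2.1) (Fin.castLE (Nat.le_succ k) i) = p.1.1.1 i
      rw [show Fin.castLE (Nat.le_succ k) i = Fin.castSucc i from rfl, Fin.snoc_castSucc]
    · apply Subtype.ext
      show iterMoves (FF (fun i : Fin k => Fin.snoc (α := fun _ : Fin (k+1) => A × ℝ) p.1.1.1
          (iterMovesInv (GG p.1.1.1) k p.2.1) (Fin.castLE (Nat.le_succ k) i))) k
        (Fin.snoc (α := fun _ : Fin (k+1) => A × ℝ) p.1.1.1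
          (iterMovesInv (GG p.1.1.1) k p.2.1) (Fin.last k)) = p.2.1
      rw [hfun, Fin.snoc_last]
      exact hΘΘ' p.1.1.1 hxs p.2.1
  · -- continuity of toFun
    apply Continuous.prodMk
    · exact Continuous.subtype_mk
        ((configJProjLE A (Nat.le_succ k)).continuous.comp continuous_subtype_val) _
    · apply Continuous.subtype_mk
      have hFcont : ∀ m, ContinuousOn
          (fun qq : (Fin k → A × ℝ) × (A × ℝ) => FF qq.1 m qq.2)
          (Sx ×ˢ (Set.univ : Set (A × ℝ))) := by
        intro m
        by_cases h : m < k
        · simp only [hFFdef, dif_pos h]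
          have hinner : ContinuousOn (fun qq : (Fin k → A × ℝ) × (A × ℝ) =>
              ((ψ ⟨m,h⟩) (qq.1 ⟨m,h⟩), qq.2)) (Sx ×ˢ (Set.univ : Set (A × ℝ))) := by
            apply ContinuousOn.prodMk
            · apply ContinuousOn.comp (ψ ⟨m,h⟩).continuousOn
                (((continuous_apply (⟨m,h⟩ : Fin k)).comp continuous_fst).continuousOn)
              intro qq hqq
              exact (hqq.1 ⟨m,h⟩).1
            · exact continuous_snd.continuousOn
          have hmaps : Set.MapsTo (fun qq : (Fin k → A × ℝ) × (A × ℝ) =>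
              ((ψ ⟨m,h⟩) (qq.1 ⟨m,h⟩), qq.2)) (Sx ×ˢ (Set.univ : Set (A × ℝ)))
              (Metric.ball (z ⟨m,h⟩) (r ⟨m,h⟩) ×ˢ (Set.univ : Set (A × ℝ))) := by
            intro qq hqq
            exact ⟨(hqq.1 ⟨m,h⟩).2, trivial⟩
          exact ContinuousOn.comp (continuousOn_move (hr0 ⟨m,h⟩) (hrt ⟨m,h⟩)) hinner hmaps
        · simp only [hFFdef, dif_neg h]
          exact continuous_snd.continuousOn
      have hIt := continuousOn_iterMoves (fun m xs p => FF xs m p) Sx hFcont k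
      exact hIt.comp_continuous
        (f := fun x : {x : ConfigJ A (k + 1) //
            configJProjLE A (Nat.le_succ k) x ∈ {c : ConfigJ A k | ∀ i, c.1 i ∈ O i}} =>
          ((fun i : Fin k => x.1.1 (Fin.castLE (Nat.le_succ k) i)),
          x.1.1 (Fin.last k)))
        (Continuous.prodMk
          (continuous_pi fun i => (continuous_apply (Fin.castLE (Nat.le_succ k) i)).comp
            (continuous_subtype_val.comp continuous_subtype_val))
          ((continuous_apply (Fin.last k)).comp
            (continuous_subtype_val.comp continuous_subtype_val)))
        (fun x => Set.mem_prod.2 ⟨fun i => x.2 i, trivial⟩)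
  · -- continuity of invFun
    apply Continuous.subtype_mk
    apply Continuous.subtype_mk
    apply continuous_pi
    intro j
    induction j using Fin.lastCases with
    | last =>
      simp only [Fin.snoc_last]
      have hGcont : ∀ m, ContinuousOn
          (fun qq : (Fin k → A × ℝ) × (A × ℝ) => GG qq.1 m qq.2)
          (Sx ×ˢ (Set.univ : Set (A × ℝ))) := by
        intro m
        by_cases h : m < k
        · simp only [hGGdef, dif_pos h]
          have hinner : ContinuousOn (fun qq : (Fin k → A × ℝ) × (A × ℝ) =>
              ((ψ ⟨m,h⟩) (qq.1 ⟨m,h⟩), qq.2)) (Sx ×ˢ (Set.univ : Set (A × ℝ))) := by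
            apply ContinuousOn.prodMk
            · apply ContinuousOn.comp (ψ ⟨m,h⟩).continuousOn
                (((continuous_apply (⟨m,h⟩ : Fin k)).comp continuous_fst).continuousOn)
              intro qq hqq
              exact (hqq.1 ⟨m,h⟩).1
            · exact continuous_snd.continuousOn
          have hmaps : Set.MapsTo (fun qq : (Fin k → A × ℝ) × (A × ℝ) =>
              ((ψ ⟨m,h⟩) (qq.1 ⟨m,h⟩), qq.2)) (Sx ×ˢ (Set.univ : Set (A × ℝ)))
              (Metric.ball (z ⟨m,h⟩) (r ⟨m,h⟩) ×ˢ (Set.univ : Set (A × ℝ))) := by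
            intro qq hqq
            exact ⟨(hqq.1 ⟨m,h⟩).2, trivial⟩
          exact ContinuousOn.comp (continuousOn_moveInv (hr0 ⟨m,h⟩) (hrt ⟨m,h⟩)) hinner hmaps
        · simp only [hGGdef, dif_neg h]
          exact continuous_snd.continuousOn
      have hIt := continuousOn_iterMovesInv (fun m xs p => GG xs m p) Sx hGcont k
      exact hIt.comp_continuous
        (f := fun p : {c : ConfigJ A k | ∀ i, c.1 i ∈ O i} ×
            {y : A × ℝ // |y.2| ≤ (k : ℝ) ∧ ∀ i : Fin k, y ≠ q.1 i} =>
          (p.1.1.1, p.2.1))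
        (by fun_prop)
        (fun p => Set.mem_prod.2 ⟨fun i => p.1.2 i, trivial⟩)
    | cast i =>
      simp only [Fin.snoc_castSucc]
      exact (continuous_apply i).comp (by fun_prop : Continuous fun a :
        {c : ConfigJ A k | ∀ i, c.1 i ∈ O i} ×
          {y : A × ℝ // |y.2| ≤ (k : ℝ) ∧ ∀ i : Fin k, y ≠ q.1 i} => a.1.1.1)
end MainProof
end MoveAux
end

section
/- Let A be a smooth n-manifold. Let D be the double mapping cylinder of the span (A × A) ← F₂(A) → (A × A), where both legs are the subspace inclusion F₂(A) ↪ A × A. Define Φ : D → F₂(A × ℝ) by sending the class of (a₁,a₂) in the first end copy of A × A to ((a₁,0),(a₂,−1)), the class of (a₁,a₂) in the second end copy to ((a₁,0),(a₂,1)), and the class of ((a₁,a₂),t) with (a₁,a₂) ∈ F₂(A), t ∈ [0,1], to ((a₁,0),(a₂,2t−1)). Then Φ is a well-defined continuous map and a homotopy equivalence. -/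
open scoped Manifold unitInterval

noncomputable section Stmt7Aux

open Set

namespace Stmt7Aux

variable {A : Type} [TopologicalSpace A]

abbrev spanMap (A : Type) [TopologicalSpace A] : Config A 2 → A × A := fun w => (w.1 0, w.1 1)

abbrev DC (A : Type) [TopologicalSpace A] := DblCyl (spanMap A) (spanMap A)

def e1 (p : A × A) : DC A := Quot.mk _ (Sum.inl p)
def e2 (p : A × A) : DC A := Quot.mk _ (Sum.inr (Sum.inr p))
def cy (w : Config A 2) (t : unitInterval) : DC A := Quot.mk _ (Sum.inr (Sum.inl (w, t)))

lemma cy_zero (w : Config A 2) : cy w 0 = e1 (w.1 0, w.1 1) :=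
  (Quot.sound (DMCRel.zero w)).symm
lemma cy_one (w : Config A 2) : cy w 1 = e2 (w.1 0, w.1 1) :=
  (Quot.sound (DMCRel.one w)).symm

@[simp] lemma config2_val_zero {M : Type*} [TopologicalSpace M] (p q : M) (h) :
    (config2 p q h).1 0 = p := rfl
@[simp] lemma config2_val_one {M : Type*} [TopologicalSpace M] (p q : M) (h) :
    (config2 p q h).1 1 = q := rfl
lemma config2_val {M : Type*} [TopologicalSpace M] (p q : M) (h) :
    (config2 p q h).1 = ![p, q] := rfl

lemma pts_ne {M : Type*} [TopologicalSpace M] (x : Config M 2) : x.1 0 ≠ x.1 1 :=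
  fun h => absurd (x.2 h) (by decide)

lemma continuous_config2 {Z M : Type*} [TopologicalSpace Z] [TopologicalSpace M]
    {f g : Z → M} (hf : Continuous f) (hg : Continuous g) (h : ∀ z, f z ≠ g z) :
    Continuous fun z => config2 (f z) (g z) (h z) := by
  apply Continuous.subtype_mk
  apply continuous_pi; intro i
  fin_cases i
  · simpa [config2_val] using hf
  · simpa [config2_val] using hg

/-- the pieces of Φ -/
def PhiFun : ((A × A) ⊕ ((Config A 2 × unitInterval) ⊕ (A × A))) → Config (A × ℝ) 2 :=
  Sum.elim (fun p => config2 (p.1, (0:ℝ)) (p.2, (-1:ℝ)) (by simp))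
    (Sum.elim
      (fun q => config2 (q.1.1 0, (0:ℝ)) (q.1.1 1, 2 * (q.2 : ℝ) - 1)
        (fun h => absurd (q.1.2 (congrArg Prod.fst h)) (by decide)))
      (fun p => config2 (p.1, (0:ℝ)) (p.2, (1:ℝ)) (by simp)))

lemma PhiFun_rel : ∀ a b, DMCRel (spanMap A) (spanMap A) a b → PhiFun a = PhiFun b := by
  intro a b r
  cases r with
  | zero w =>
    apply Subtype.ext; funext i; fin_cases i <;> simp [PhiFun, config2_val] <;> norm_num
  | one w =>
    apply Subtype.ext; funext i; fin_cases i <;> simp [PhiFun, config2_val] <;> norm_num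

lemma continuous_PhiFun : Continuous (PhiFun (A := A)) := by
  apply Continuous.sumElim
  · exact continuous_config2 (continuous_fst.prodMk continuous_const)
      (continuous_snd.prodMk continuous_const) _
  apply Continuous.sumElim
  · refine continuous_config2 ?_ ?_ _
    · exact (((continuous_apply (0 : Fin 2)).comp
        (continuous_subtype_val.comp continuous_fst)).prodMk continuous_const)
    · exact (((continuous_apply (1 : Fin 2)).comp
        (continuous_subtype_val.comp continuous_fst)).prodMk
        ((continuous_const.mul (continuous_subtype_val.comp continuous_snd)).sub
          continuous_const))
  · exact continuous_config2 (continuous_fst.prodMk continuous_const)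
      (continuous_snd.prodMk continuous_const) _

def PhiC (A : Type) [TopologicalSpace A] : C(DC A, Config (A × ℝ) 2) :=
  ⟨Quot.lift PhiFun PhiFun_rel, continuous_quot_lift _ continuous_PhiFun⟩


/-! ### the homotopy inverse Ψ -/

section Psi

variable (ρ : A → A → ℝ)

/-- vertical separation -/
def dd (x : Config (A × ℝ) 2) : ℝ := (x.1 1).2 - (x.1 0).2

/-- horizontal separation, clamped at 1 -/
def mm (x : Config (A × ℝ) 2) : ℝ := min (ρ (x.1 0).1 (x.1 1).1) 1

def den (x : Config (A × ℝ) 2) : ℝ := max |dd x| (mm ρ x)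

def uu (x : Config (A × ℝ) 2) : ℝ := dd x / den ρ x

/-- the cylinder coordinate -/
def tI (x : Config (A × ℝ) 2) : unitInterval :=
  Set.projIcc 0 1 zero_le_one ((uu ρ x + 1) / 2)

open Classical in
def PsiFun (x : Config (A × ℝ) 2) : DC A :=
  if h : (x.1 0).1 ≠ (x.1 1).1 then
    cy (config2 (x.1 0).1 (x.1 1).1 h) (tI ρ x)
  else if 0 < dd x then e2 ((x.1 0).1, (x.1 1).1) else e1 ((x.1 0).1, (x.1 1).1)

variable {ρ}
variable (hz : ∀ a b : A, ρ a b = 0 ↔ a = b) (hnn : ∀ a b : A, 0 ≤ ρ a b)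

section Vals
include hz hnn

lemma mm_nonneg (x : Config (A × ℝ) 2) : 0 ≤ mm ρ x :=
  le_min (hnn _ _) zero_le_one

lemma dd_ne_of_eq {x : Config (A × ℝ) 2} (h : (x.1 0).1 = (x.1 1).1) : dd x ≠ 0 := by
  intro h0
  apply pts_ne x
  have : (x.1 1).2 = (x.1 0).2 := by have := sub_eq_zero.mp h0; linarith [this]
  exact Prod.ext h this.symm

lemma den_pos (x : Config (A × ℝ) 2) : 0 < den ρ x := by
  by_cases h : (x.1 0).1 = (x.1 1).1
  · exact lt_max_of_lt_left (abs_pos.mpr (dd_ne_of_eq hz hnn h))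
  · refine lt_max_of_lt_right (lt_min ?_ one_pos)
    exact lt_of_le_of_ne (hnn _ _) (fun h0 => h ((hz _ _).mp h0.symm))

lemma abs_uu_le (x : Config (A × ℝ) 2) : |uu ρ x| ≤ 1 := by
  rw [uu, abs_div, abs_of_pos (den_pos hz hnn x)]
  exact div_le_one_of_le₀ (le_max_left _ _) (den_pos hz hnn x).le

lemma tI_mem (x : Config (A × ℝ) 2) : (uu ρ x + 1) / 2 ∈ Set.Icc (0:ℝ) 1 := by
  have := abs_le.mp (abs_uu_le hz hnn x)
  constructor <;> [linarith [this.1]; linarith [this.2]]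

lemma tI_coe (x : Config (A × ℝ) 2) : (tI ρ x : ℝ) = (uu ρ x + 1) / 2 := by
  rw [tI, Set.projIcc_of_mem _ (tI_mem hz hnn x)]

lemma uu_of_eq {x : Config (A × ℝ) 2} (h : (x.1 0).1 = (x.1 1).1) :
    uu ρ x = dd x / |dd x| := by
  rw [uu, den, mm, (hz _ _).mpr h]
  rw [min_eq_left zero_le_one, max_eq_left (abs_nonneg _)]

lemma uu_one_of_pos {x : Config (A × ℝ) 2} (h : mm ρ x < dd x) : uu ρ x = 1 := by
  have hd : 0 < dd x := lt_of_le_of_lt (mm_nonneg hz hnn x) h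
  rw [uu, den, abs_of_pos hd, max_eq_left h.le, div_self hd.ne']

lemma uu_neg_one_of_neg {x : Config (A × ℝ) 2} (h : dd x < -(mm ρ x)) : uu ρ x = -1 := by
  have hd : dd x < 0 := lt_of_lt_of_le h (neg_nonpos.mpr (mm_nonneg hz hnn x))
  have : |dd x| = -(dd x) := abs_of_neg hd
  rw [uu, den, this, max_eq_left (by linarith), div_neg_eq_neg_div, div_self (by linarith)]

lemma uu_of_dd_one {x : Config (A × ℝ) 2} (h : dd x = 1) : uu ρ x = 1 := by
  have : den ρ x = 1 := by
    rw [den, h, abs_one]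
    exact max_eq_left (min_le_right _ _)
  rw [uu, h, this, div_one]

lemma uu_of_dd_neg_one {x : Config (A × ℝ) 2} (h : dd x = -1) : uu ρ x = -1 := by
  have : den ρ x = 1 := by
    rw [den, h, abs_neg, abs_one]
    exact max_eq_left (min_le_right _ _)
  rw [uu, h, this, div_one]

end Vals

end Psi

section PsiCont

variable [T2Space A]
variable {ρ : A → A → ℝ}
variable (hρc : Continuous fun p : A × A => ρ p.1 p.2)
variable (hz : ∀ a b : A, ρ a b = 0 ↔ a = b) (hnn : ∀ a b : A, 0 ≤ ρ a b)

lemma cont_p0 : Continuous fun x : Config (A × ℝ) 2 => x.1 0 :=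
  (continuous_apply _).comp continuous_subtype_val
lemma cont_p1 : Continuous fun x : Config (A × ℝ) 2 => x.1 1 :=
  (continuous_apply _).comp continuous_subtype_val

lemma continuous_dd : Continuous (dd (A := A)) :=
  (continuous_snd.comp cont_p1).sub (continuous_snd.comp cont_p0)

include hρc in
lemma continuous_mm : Continuous (mm ρ) :=
  (hρc.comp ((continuous_fst.comp cont_p0).prodMk (continuous_fst.comp cont_p1))).min
    continuous_const

include hρc hz hnn in
lemma continuous_uu : Continuous (uu ρ) := by
  refine Continuous.div continuous_dd (continuous_dd.abs.max (continuous_mm hρc)) ?_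
  exact fun x => (den_pos hz hnn x).ne'

include hρc hz hnn in
lemma continuous_tI : Continuous (tI ρ) :=
  continuous_projIcc.comp (((continuous_uu hρc hz hnn).add continuous_const).div_const 2)

lemma continuous_cy : Continuous fun q : Config A 2 × unitInterval => cy q.1 q.2 :=
  continuous_quot_mk.comp (continuous_inr.comp continuous_inl)

lemma continuous_e1 : Continuous (e1 (A := A)) := continuous_quot_mk.comp continuous_inl
lemma continuous_e2 : Continuous (e2 (A := A)) :=
  continuous_quot_mk.comp (continuous_inr.comp continuous_inr)

include hz hnn in
lemma PsiFun_eq_e2 {x : Config (A × ℝ) 2} (hx : mm ρ x < dd x) :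
    PsiFun ρ x = e2 ((x.1 0).1, (x.1 1).1) := by
  rw [PsiFun]
  split_ifs with h h2
  · have h1 : uu ρ x = 1 := uu_one_of_pos hz hnn hx
    have ht : tI ρ x = 1 := Subtype.ext (by rw [tI_coe hz hnn, h1]; norm_num)
    rw [ht, cy_one, config2_val_zero, config2_val_one]
  · rfl
  · exact absurd (lt_of_le_of_lt (mm_nonneg hz hnn x) hx) h2

include hz hnn in
lemma PsiFun_eq_e1 {x : Config (A × ℝ) 2} (hx : dd x < -(mm ρ x)) :
    PsiFun ρ x = e1 ((x.1 0).1, (x.1 1).1) := by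
  have hd : dd x < 0 := lt_of_lt_of_le hx (neg_nonpos.mpr (mm_nonneg hz hnn x))
  rw [PsiFun]
  split_ifs with h h2
  · have h1 : uu ρ x = -1 := uu_neg_one_of_neg hz hnn hx
    have ht : tI ρ x = 0 := Subtype.ext (by rw [tI_coe hz hnn, h1]; norm_num)
    rw [ht, cy_zero, config2_val_zero, config2_val_one]
  · exact absurd h2 (not_lt.mpr hd.le)
  · rfl

include hρc hz hnn in
lemma continuous_PsiFun : Continuous (PsiFun ρ) := by
  rw [continuous_iff_continuousAt]
  intro x₀
  by_cases h : (x₀.1 0).1 ≠ (x₀.1 1).1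
  · have hU : IsOpen {x : Config (A × ℝ) 2 | (x.1 0).1 ≠ (x.1 1).1} :=
      isOpen_ne_fun (continuous_fst.comp cont_p0) (continuous_fst.comp cont_p1)
    refine ContinuousOn.continuousAt ?_ (hU.mem_nhds h)
    rw [continuousOn_iff_continuous_restrict]
    have hres : Set.restrict {x : Config (A × ℝ) 2 | (x.1 0).1 ≠ (x.1 1).1} (PsiFun ρ) =
        fun y : {x : Config (A × ℝ) 2 // (x.1 0).1 ≠ (x.1 1).1} =>
          cy (config2 (y.1.1 0).1 (y.1.1 1).1 y.2) (tI ρ y.1) :=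
      funext fun y => dif_pos y.2
    refine (congrArg Continuous hres).mpr ?_
    refine continuous_cy.comp (Continuous.prodMk ?_ ?_)
    · exact continuous_config2
        (continuous_fst.comp (cont_p0.comp continuous_subtype_val))
        (continuous_fst.comp (cont_p1.comp continuous_subtype_val)) (fun y => y.2)
    · exact (continuous_tI hρc hz hnn).comp continuous_subtype_val
  · rw [not_ne_iff] at h
    have hd := dd_ne_of_eq hz hnn h
    have hmm0 : mm ρ x₀ = 0 := by
      rw [mm, (hz _ _).mpr h, min_eq_left zero_le_one]
    rcases hd.lt_or_gt with hneg | hpos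
    · have hV : IsOpen {x : Config (A × ℝ) 2 | dd x < -(mm ρ x)} :=
        isOpen_lt continuous_dd (continuous_mm hρc).neg
      have hx0 : dd x₀ < -(mm ρ x₀) := by rw [hmm0]; simpa using hneg
      refine ContinuousAt.congr (f := fun x => e1 ((x.1 0).1, (x.1 1).1)) ?_ ?_
      · exact (continuous_e1.comp
          ((continuous_fst.comp cont_p0).prodMk (continuous_fst.comp cont_p1))).continuousAt
      · exact Filter.eventuallyEq_of_mem (hV.mem_nhds hx0)
          (fun x hx => (PsiFun_eq_e1 hz hnn hx).symm)
    · have hV : IsOpen {x : Config (A × ℝ) 2 | mm ρ x < dd x} :=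
        isOpen_lt (continuous_mm hρc) continuous_dd
      have hx0 : mm ρ x₀ < dd x₀ := by rw [hmm0]; exact hpos
      refine ContinuousAt.congr (f := fun x => e2 ((x.1 0).1, (x.1 1).1)) ?_ ?_
      · exact (continuous_e2.comp
          ((continuous_fst.comp cont_p0).prodMk (continuous_fst.comp cont_p1))).continuousAt
      · exact Filter.eventuallyEq_of_mem (hV.mem_nhds hx0)
          (fun x hx => (PsiFun_eq_e2 hz hnn hx).symm)

def PsiC : C(Config (A × ℝ) 2, DC A) := ⟨PsiFun ρ, continuous_PsiFun hρc hz hnn⟩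

end PsiCont


/-! ### homotopy `Φ ∘ Ψ ≃ id` -/

section HtpyX

variable [T2Space A]
variable {ρ : A → A → ℝ}
variable (hρc : Continuous fun p : A × A => ρ p.1 p.2)
variable (hz : ∀ a b : A, ρ a b = 0 ↔ a = b) (hnn : ∀ a b : A, 0 ≤ ρ a b)

include hz hnn in
lemma HFun_ne (x : Config (A × ℝ) 2) {τ : ℝ} (h0 : 0 ≤ τ) (h1 : τ ≤ 1) :
    ((x.1 0).1, (1 - τ) * (x.1 0).2) ≠ ((x.1 1).1, (1 - τ) * (x.1 1).2 + τ * uu ρ x) := by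
  intro hcon
  have ha : (x.1 0).1 = (x.1 1).1 := (Prod.ext_iff.mp hcon).1
  have hb : (1 - τ) * (x.1 0).2 = (1 - τ) * (x.1 1).2 + τ * uu ρ x :=
    (Prod.ext_iff.mp hcon).2
  have hu : uu ρ x = dd x / |dd x| := uu_of_eq hz hnn ha
  have hd : dd x ≠ 0 := dd_ne_of_eq hz hnn ha
  have key : (1 - τ) * dd x + τ * uu ρ x = 0 := by
    rw [dd]; linarith [hb]
  rcases hd.lt_or_gt with hlt | hlt
  · rw [hu, abs_of_neg hlt, div_neg_eq_neg_div, div_self hlt.ne] at key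
    rcases eq_or_lt_of_le h1 with rfl | h1'
    · norm_num at key
    · nlinarith
  · rw [hu, abs_of_pos hlt, div_self hlt.ne'] at key
    rcases eq_or_lt_of_le h1 with rfl | h1'
    · norm_num at key
    · nlinarith

/-- the straight-line homotopy from `id` to `Φ ∘ Ψ` -/
def HC : C(unitInterval × Config (A × ℝ) 2, Config (A × ℝ) 2) :=
  ⟨fun p => config2 ((p.2.1 0).1, (1 - (p.1 : ℝ)) * (p.2.1 0).2)
      ((p.2.1 1).1, (1 - (p.1 : ℝ)) * (p.2.1 1).2 + (p.1 : ℝ) * uu ρ p.2)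
      (HFun_ne hz hnn p.2 p.1.2.1 p.1.2.2), by
    have hτ : Continuous fun p : unitInterval × Config (A × ℝ) 2 => (p.1 : ℝ) :=
      continuous_subtype_val.comp continuous_fst
    refine continuous_config2 ?_ ?_ _
    · exact (continuous_fst.comp (cont_p0.comp continuous_snd)).prodMk
        (((continuous_const.sub hτ)).mul (continuous_snd.comp (cont_p0.comp continuous_snd)))
    · exact (continuous_fst.comp (cont_p1.comp continuous_snd)).prodMk
        ((((continuous_const.sub hτ)).mul
          (continuous_snd.comp (cont_p1.comp continuous_snd))).add
          (hτ.mul ((continuous_uu hρc hz hnn).comp continuous_snd)))⟩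

include hρc in
lemma HC_zero (x : Config (A × ℝ) 2) : HC hρc hz hnn (0, x) = x := by
  apply Subtype.ext
  funext i
  fin_cases i <;> simp [HC, config2_val]

include hρc hz hnn in
lemma Phi_Psi_val (x : Config (A × ℝ) 2) :
    (PhiC A (PsiFun ρ x)).1 = ![((x.1 0).1, (0:ℝ)), ((x.1 1).1, uu ρ x)] := by
  rw [PsiFun]
  split_ifs with h h2
  · show (PhiFun (Sum.inr (Sum.inl _))).1 = _
    funext i
    fin_cases i
    · simp [PhiFun, config2_val]
    · simp [PhiFun, config2_val]
      rw [tI_coe hz hnn]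
      ring
  · rw [not_ne_iff] at h
    show (PhiFun (Sum.inr (Sum.inr _))).1 = _
    have hu : uu ρ x = 1 := by
      rw [uu_of_eq hz hnn h, abs_of_pos h2, div_self h2.ne']
    funext i
    fin_cases i <;> simp [PhiFun, config2_val, hu]
  · rw [not_ne_iff] at h
    show (PhiFun (Sum.inl _)).1 = _
    have hd : dd x < 0 := (dd_ne_of_eq hz hnn h).lt_or_gt.resolve_right h2
    have hu : uu ρ x = -1 := by
      rw [uu_of_eq hz hnn h, abs_of_neg hd, div_neg_eq_neg_div, div_self hd.ne]
    funext i
    fin_cases i <;> simp [PhiFun, config2_val, hu]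

include hρc in
lemma HC_one (x : Config (A × ℝ) 2) :
    HC hρc hz hnn (1, x) = (PhiC A).comp (PsiC hρc hz hnn) x := by
  apply Subtype.ext
  show _ = (PhiC A (PsiFun ρ x)).1
  rw [Phi_Psi_val hρc hz hnn]
  funext i
  fin_cases i <;> simp [HC, config2_val]

/-- the homotopy `Φ ∘ Ψ ≃ id`. -/
def HtpyX : ContinuousMap.Homotopy ((PhiC A).comp (PsiC hρc hz hnn))
    (ContinuousMap.id (Config (A × ℝ) 2)) :=
  ContinuousMap.Homotopy.symm
    { toContinuousMap := HC hρc hz hnn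
      map_zero_left := HC_zero hρc hz hnn
      map_one_left := HC_one hρc hz hnn }

end HtpyX


/-! ### homotopy `Ψ ∘ Φ ≃ id` -/

section HtpyD

variable [T2Space A]
variable {ρ : A → A → ℝ}
variable (hρc : Continuous fun p : A × A => ρ p.1 p.2)
variable (hz : ∀ a b : A, ρ a b = 0 ↔ a = b) (hnn : ∀ a b : A, 0 ≤ ρ a b)

lemma dd_Phi_cy (w : Config A 2) (t : unitInterval) :
    dd (PhiFun (Sum.inr (Sum.inl (w, t)))) = 2 * (t : ℝ) - 1 := by
  simp [dd, PhiFun, config2_val]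

variable (ρ) in
/-- the sliding map on the cylinder part -/
def Gcyl (q : (Config A 2 × unitInterval) × unitInterval) : DC A :=
  cy q.1.1 (Set.projIcc 0 1 zero_le_one
    ((1 - (q.2 : ℝ)) * (q.1.2 : ℝ) +
      (q.2 : ℝ) * ((uu ρ (PhiFun (Sum.inr (Sum.inl q.1))) + 1) / 2)))

include hρc hz hnn in
lemma continuous_Gcyl : Continuous (Gcyl ρ (A := A)) := by
  have hs : Continuous fun q : (Config A 2 × unitInterval) × unitInterval => (q.2 : ℝ) :=
    continuous_subtype_val.comp continuous_snd
  have ht : Continuous fun q : (Config A 2 × unitInterval) × unitInterval => (q.1.2 : ℝ) :=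
    continuous_subtype_val.comp (continuous_snd.comp continuous_fst)
  have hu : Continuous fun q : (Config A 2 × unitInterval) × unitInterval =>
      uu ρ (PhiFun (Sum.inr (Sum.inl q.1))) :=
    (continuous_uu hρc hz hnn).comp (continuous_PhiFun.comp
      ((continuous_inr.comp continuous_inl).comp continuous_fst))
  have harith : Continuous fun q : (Config A 2 × unitInterval) × unitInterval =>
      ((1 - (q.2 : ℝ)) * (q.1.2 : ℝ) +
        (q.2 : ℝ) * ((uu ρ (PhiFun (Sum.inr (Sum.inl q.1))) + 1) / 2)) :=
    ((continuous_const.sub hs).mul ht).add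
      (hs.mul ((hu.add continuous_const).div_const 2))
  unfold Gcyl
  exact Continuous.comp (f := fun q : (Config A 2 × unitInterval) × unitInterval =>
      (q.1.1, Set.projIcc (0:ℝ) 1 zero_le_one
        ((1 - (q.2 : ℝ)) * (q.1.2 : ℝ) +
          (q.2 : ℝ) * ((uu ρ (PhiFun (Sum.inr (Sum.inl q.1))) + 1) / 2))))
    continuous_cy
    ((continuous_fst.comp continuous_fst).prodMk (continuous_projIcc.comp harith))

variable (ρ) in
/-- the pieces of the deformation of `DC A` -/
def GFun : ((A × A) ⊕ ((Config A 2 × unitInterval) ⊕ (A × A))) → C(unitInterval, DC A) :=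
  Sum.elim (fun p => ContinuousMap.const _ (e1 p))
    (Sum.elim
      (fun q => ⟨fun s => Gcyl ρ (q, s),
        (continuous_Gcyl hρc hz hnn).comp (Continuous.prodMk continuous_const continuous_id)⟩)
      (fun p => ContinuousMap.const _ (e2 p)))

include hρc hz hnn in
lemma GFun_rel : ∀ a b, DMCRel (spanMap A) (spanMap A) a b →
    GFun ρ hρc hz hnn a = GFun ρ hρc hz hnn b := by
  intro a b r
  cases r with
  | zero w =>
    ext s
    show e1 (spanMap A w) = Gcyl ρ ((w, 0), s)
    have h1 : uu ρ (PhiFun (Sum.inr (Sum.inl (w, (0 : unitInterval))))) = -1 :=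
      uu_of_dd_neg_one hz hnn (by rw [dd_Phi_cy]; norm_num)
    rw [Gcyl, h1]
    rw [show ((1 - (s : ℝ)) * ((0 : unitInterval) : ℝ) + (s : ℝ) * ((-1 + 1) / 2)) = 0 by
      norm_num]
    rw [show Set.projIcc (0:ℝ) 1 zero_le_one 0 = 0 from Subtype.ext (by
      simp [Set.coe_projIcc])]
    exact (cy_zero w).symm
  | one w =>
    ext s
    show e2 (spanMap A w) = Gcyl ρ ((w, 1), s)
    have h1 : uu ρ (PhiFun (Sum.inr (Sum.inl (w, (1 : unitInterval))))) = 1 :=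
      uu_of_dd_one hz hnn (by rw [dd_Phi_cy]; norm_num)
    rw [Gcyl, h1]
    rw [show ((1 - (s : ℝ)) * ((1 : unitInterval) : ℝ) + (s : ℝ) * ((1 + 1) / 2)) = 1 by
      norm_num]
    rw [show Set.projIcc (0:ℝ) 1 zero_le_one 1 = 1 from Subtype.ext (by
      simp [Set.coe_projIcc])]
    exact (cy_one w).symm

include hρc hz hnn in
lemma continuous_GFun : Continuous (GFun ρ hρc hz hnn) := by
  refine Continuous.sumElim ?_ (Continuous.sumElim ?_ ?_)
  · exact ContinuousMap.continuous_const'.comp continuous_e1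
  · exact (ContinuousMap.curry
      (⟨Gcyl ρ, continuous_Gcyl hρc hz hnn⟩ :
        C((Config A 2 × unitInterval) × unitInterval, DC A))).continuous
  · exact ContinuousMap.continuous_const'.comp continuous_e2

end HtpyD


section Assemble

variable [T2Space A]
variable {ρ : A → A → ℝ}
variable (hρc : Continuous fun p : A × A => ρ p.1 p.2)
variable (hz : ∀ a b : A, ρ a b = 0 ↔ a = b) (hnn : ∀ a b : A, 0 ≤ ρ a b)

def GC0 : C(DC A, C(unitInterval, DC A)) :=
  ⟨Quot.lift (GFun ρ hρc hz hnn) (GFun_rel hρc hz hnn),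
    continuous_quot_lift _ (continuous_GFun hρc hz hnn)⟩

def GC : C(unitInterval × DC A, DC A) :=
  (ContinuousMap.uncurry (GC0 hρc hz hnn)).comp ⟨Prod.swap, continuous_swap⟩


include hρc in
lemma GC_apply (a : (A × A) ⊕ ((Config A 2 × unitInterval) ⊕ (A × A))) (s : unitInterval) :
    GC hρc hz hnn (s, Quot.mk _ a) = GFun ρ hρc hz hnn a s := rfl

lemma PhiC_mk (a : (A × A) ⊕ ((Config A 2 × unitInterval) ⊕ (A × A))) :
    PhiC A (Quot.mk (DMCRel (spanMap A) (spanMap A)) a) = PhiFun a := rfl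

include hρc in
lemma PsiC_apply (y : Config (A × ℝ) 2) : PsiC hρc hz hnn y = PsiFun ρ y := rfl

include hρc in
lemma GFun_inl (p : A × A) (s : unitInterval) :
    GFun ρ hρc hz hnn (Sum.inl p) s = e1 p := rfl

include hρc in
lemma GFun_inr (p : A × A) (s : unitInterval) :
    GFun ρ hρc hz hnn (Sum.inr (Sum.inr p)) s = e2 p := rfl

include hρc in
lemma GFun_cy (w : Config A 2) (t s : unitInterval) :
    GFun ρ hρc hz hnn (Sum.inr (Sum.inl (w, t))) s = Gcyl ρ ((w, t), s) := rfl

include hρc in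
lemma GC_zero (x : DC A) : GC hρc hz hnn (0, x) = ContinuousMap.id (DC A) x := by
  induction x using Quot.ind with
  | _ a =>
    rcases a with p | q | p
    · rw [GC_apply, GFun_inl]; rfl
    · obtain ⟨w, t⟩ := q
      rw [GC_apply, GFun_cy]
      show Gcyl ρ ((w, t), 0) = cy w t
      rw [Gcyl]
      congr 1
      apply Subtype.ext
      rw [Set.coe_projIcc]
      rw [show (1 - ((0:unitInterval):ℝ)) * (t:ℝ) + ((0:unitInterval):ℝ) *
        ((uu ρ (PhiFun (Sum.inr (Sum.inl (w, t)))) + 1) / 2) = (t:ℝ) by norm_num]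
      rw [min_eq_right t.2.2, max_eq_right t.2.1]
    · rw [GC_apply, GFun_inr]; rfl

include hρc in
lemma GC_one (x : DC A) :
    GC hρc hz hnn (1, x) = (PsiC hρc hz hnn).comp (PhiC A) x := by
  induction x using Quot.ind with
  | _ a =>
    rw [GC_apply]
    show GFun ρ hρc hz hnn a 1 = PsiFun ρ (PhiFun a)
    rcases a with p | q | p
    · rw [GFun_inl]
      have hdd : dd (PhiFun (A := A) (Sum.inl p)) = -1 := by simp [dd, PhiFun, config2_val]
      rw [PsiFun]
      split_ifs with h h2
      · have h1 : uu ρ (PhiFun (A := A) (Sum.inl p)) = -1 := uu_of_dd_neg_one hz hnn hdd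
        have ht : tI ρ (PhiFun (A := A) (Sum.inl p)) = 0 :=
          Subtype.ext (by rw [tI_coe hz hnn, h1]; norm_num)
        rw [ht, cy_zero]; rfl
      · rw [hdd] at h2; linarith
      · rfl
    · obtain ⟨w, t⟩ := q
      rw [GFun_cy, PsiFun]
      split_ifs with h
      · rw [Gcyl]
        congr 1
        · apply Subtype.ext
          funext i
          fin_cases i <;> rfl
        · apply Subtype.ext
          rw [Set.coe_projIcc, tI_coe hz hnn]
          rw [show (1 - ((1:unitInterval):ℝ)) * (t:ℝ) + ((1:unitInterval):ℝ) *
            ((uu ρ (PhiFun (Sum.inr (Sum.inl (w, t)))) + 1) / 2) =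
            (uu ρ (PhiFun (Sum.inr (Sum.inl (w, t)))) + 1) / 2 by norm_num]
          rw [min_eq_right (tI_mem hz hnn _).2, max_eq_right (tI_mem hz hnn _).1]
      · exact absurd (pts_ne w) h
      · exact absurd (pts_ne w) h
    · rw [GFun_inr]
      have hdd : dd (PhiFun (A := A) (Sum.inr (Sum.inr p))) = 1 := by
        simp [dd, PhiFun, config2_val]
      rw [PsiFun]
      split_ifs with h h2
      · have h1 : uu ρ (PhiFun (A := A) (Sum.inr (Sum.inr p))) = 1 :=
          uu_of_dd_one hz hnn hdd
        have ht : tI ρ (PhiFun (A := A) (Sum.inr (Sum.inr p))) = 1 :=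
          Subtype.ext (by rw [tI_coe hz hnn, h1]; norm_num)
        rw [ht, cy_one]; rfl
      · rfl
      · rw [hdd] at h2; norm_num at h2

/-- the homotopy `Ψ ∘ Φ ≃ id`. -/
def HtpyD : ContinuousMap.Homotopy ((PsiC hρc hz hnn).comp (PhiC A))
    (ContinuousMap.id (DC A)) :=
  ContinuousMap.Homotopy.symm
    { toContinuousMap := GC hρc hz hnn
      map_zero_left := fun x => GC_zero hρc hz hnn x
      map_one_left := fun x => GC_one hρc hz hnn x }

include hρc hz hnn in
lemma isHtpyEquiv_PhiC : IsHtpyEquiv (PhiC A) :=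
  ⟨PsiC hρc hz hnn, ⟨HtpyD hρc hz hnn⟩, ⟨HtpyX hρc hz hnn⟩⟩

end Assemble


end Stmt7Aux

end Stmt7Aux

theorem stmt7 {n : ℕ} (A : Type) [TopologicalSpace A] [T2Space A] [SecondCountableTopology A] [Nonempty A]
    [ChartedSpace (EuclideanSpace ℝ (Fin n)) A] [IsManifold (𝓡 n) ((⊤ : ℕ∞) : WithTop ℕ∞) A] :
    ∃ Φ : C(DblCyl (fun w : Config A 2 => (w.1 0, w.1 1))
            (fun w : Config A 2 => (w.1 0, w.1 1)), Config (A × ℝ) 2),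
      (∀ p : A × A, Φ (Quot.mk _ (Sum.inl p)) =
        config2 (p.1, (0 : ℝ)) (p.2, (-1 : ℝ))
          (by simp [Prod.ext_iff])) ∧
      (∀ p : A × A, Φ (Quot.mk _ (Sum.inr (Sum.inr p))) =
        config2 (p.1, (0 : ℝ)) (p.2, (1 : ℝ))
          (by simp [Prod.ext_iff])) ∧
      (∀ (w : Config A 2) (t : unitInterval),
        Φ (Quot.mk _ (Sum.inr (Sum.inl (w, t)))) =
        config2 (w.1 0, (0 : ℝ)) (w.1 1, 2 * (t : ℝ) - 1)
          (fun h => absurd (w.2 (congrArg Prod.fst h)) (by decide))) ∧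
      IsHtpyEquiv Φ := by
  haveI : LocallyCompactSpace A :=
    ChartedSpace.locallyCompactSpace (EuclideanSpace ℝ (Fin n)) A
  haveI : TopologicalSpace.MetrizableSpace A := Manifold.metrizableSpace (𝓡 n) A
  letI : MetricSpace A := TopologicalSpace.metrizableSpaceMetric A
  have hρc : Continuous fun p : A × A => dist p.1 p.2 := continuous_dist
  have hz : ∀ a b : A, dist a b = 0 ↔ a = b := fun a b => dist_eq_zero
  have hnn : ∀ a b : A, 0 ≤ dist a b := fun a b => dist_nonneg
  exact ⟨Stmt7Aux.PhiC A, fun p => rfl, fun p => rfl, fun w t => rfl,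
    Stmt7Aux.isHtpyEquiv_PhiC hρc hz hnn⟩
end

section
/- Let p ≥ 1 and let E = EuclideanSpace ℝ (Fin p). The map r : F₂(E) → S^{p−1} defined by r(x,y) = (x − y)/‖x − y‖, where S^{p−1} is the unit sphere in E, is a continuous homotopy equivalence. In particular, F₂(ℝ^p) has the homotopy type of a sphere of dimension p − 1. -/
open scoped Manifold unitInterval

-- auxiliary section to splice
noncomputable section Aux13


lemma config2_ne13 {M : Type*} [TopologicalSpace M] (x : Config M 2) :
    x.1 0 ≠ x.1 1 := fun h => by simpa using x.2 h

variable {p : ℕ}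

lemma sub_ne13 (x : Config (EuclideanSpace ℝ (Fin p)) 2) : x.1 0 - x.1 1 ≠ 0 :=
  sub_ne_zero.2 (config2_ne13 x)

lemma cont_a13 : Continuous (fun x : Config (EuclideanSpace ℝ (Fin p)) 2 => x.1 0) :=
  (continuous_apply (0 : Fin 2)).comp continuous_subtype_val

lemma cont_b13 : Continuous (fun x : Config (EuclideanSpace ℝ (Fin p)) 2 => x.1 1) :=
  (continuous_apply (1 : Fin 2)).comp continuous_subtype_val

lemma cont_invnorm13 : Continuous (fun x : Config (EuclideanSpace ℝ (Fin p)) 2 =>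
    ‖x.1 0 - x.1 1‖⁻¹) :=
  continuous_iff_continuousAt.2 fun x =>
    ((cont_a13.sub cont_b13).norm.continuousAt).inv₀ (norm_ne_zero_iff.2 (sub_ne13 x))

/-- the retraction map -/
def rmap13 (p : ℕ) : C(Config (EuclideanSpace ℝ (Fin p)) 2,
    Metric.sphere (0 : EuclideanSpace ℝ (Fin p)) 1) :=
  ContinuousMap.mk
    (fun x => ⟨‖x.1 0 - x.1 1‖⁻¹ • (x.1 0 - x.1 1), by
      rw [mem_sphere_zero_iff_norm]
      exact norm_smul_inv_norm (𝕜 := ℝ) (sub_ne13 x)⟩)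
    (by
      apply Continuous.subtype_mk
      exact cont_invnorm13.smul (cont_a13.sub cont_b13))

lemma sphere_ne_neg13 (v : Metric.sphere (0 : EuclideanSpace ℝ (Fin p)) 1) :
    (v : EuclideanSpace ℝ (Fin p)) ≠ -(v : EuclideanSpace ℝ (Fin p)) := by
  intro h
  have hv : ‖(v : EuclideanSpace ℝ (Fin p))‖ = 1 := by
    simpa using mem_sphere_zero_iff_norm.1 v.2
  have : (v : EuclideanSpace ℝ (Fin p)) = 0 := by
    have := eq_neg_iff_add_eq_zero.1 h
    have h2 : (2 : ℝ) • (v : EuclideanSpace ℝ (Fin p)) = 0 := by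
      rw [two_smul]; exact this
    simpa using smul_eq_zero.1 h2
  rw [this] at hv; simp at hv

/-- the section: v ↦ (v, -v) -/
def gmap13 (p : ℕ) : C(Metric.sphere (0 : EuclideanSpace ℝ (Fin p)) 1,
    Config (EuclideanSpace ℝ (Fin p)) 2) :=
  ⟨fun v => config2 (v : EuclideanSpace ℝ (Fin p)) (-(v : EuclideanSpace ℝ (Fin p)))
      (sphere_ne_neg13 v), by
    refine Continuous.subtype_mk (continuous_pi fun i => ?_) _
    fin_cases i
    · exact continuous_subtype_val
    · exact continuous_subtype_val.neg⟩

lemma r_g13 (v : Metric.sphere (0 : EuclideanSpace ℝ (Fin p)) 1) :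
    (rmap13 p) ((gmap13 p) v) = v := by
  have hv : ‖(v : EuclideanSpace ℝ (Fin p))‖ = 1 := by
    simpa using mem_sphere_zero_iff_norm.1 v.2
  apply Subtype.ext
  show ‖_ - _‖⁻¹ • (_ - _) = (v : EuclideanSpace ℝ (Fin p))
  have h0 : ((gmap13 p) v).1 0 = (v : EuclideanSpace ℝ (Fin p)) := rfl
  have h1 : ((gmap13 p) v).1 1 = -(v : EuclideanSpace ℝ (Fin p)) := rfl
  rw [h0, h1, sub_neg_eq_add, ← two_smul ℝ]
  have h2 : ‖(2 : ℝ) • (v : EuclideanSpace ℝ (Fin p))‖ = 2 := by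
    rw [norm_smul, hv]; norm_num
  rw [h2, smul_smul]
  norm_num

lemma ne_neg13 {V : Type*} [AddCommGroup V] [Module ℝ V] {w : V} (hw : w ≠ 0) : w ≠ -w := by
  intro h
  apply hw
  have h2 : (2 : ℝ) • w = 0 := by
    rw [two_smul]
    exact add_eq_zero_iff_eq_neg.2 h
  simpa using smul_eq_zero.1 h2

def Hfun13 (p : ℕ) (t : ℝ) (x : Config (EuclideanSpace ℝ (Fin p)) 2) (i : Fin 2) :
    EuclideanSpace ℝ (Fin p) :=
  ((1 - t) / 2) • (x.1 0 + x.1 1) +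
    (![(1 : ℝ), -1] i) •
      ((((1 - t) + 2 * t * ‖x.1 0 - x.1 1‖⁻¹) / 2) • (x.1 0 - x.1 1))

lemma coef_pos13 {p : ℕ} {t : ℝ} (ht0 : 0 ≤ t) (ht1 : t ≤ 1)
    (x : Config (EuclideanSpace ℝ (Fin p)) 2) :
    0 < ((1 - t) + 2 * t * ‖x.1 0 - x.1 1‖⁻¹) / 2 := by
  have hn : 0 < ‖x.1 0 - x.1 1‖⁻¹ :=
    inv_pos.2 (norm_pos_iff.2 (sub_ne13 x))
  rcases eq_or_lt_of_le ht0 with h | h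
  · rw [← h]; norm_num
  · nlinarith

lemma Hfun13_inj (p : ℕ) (t : ℝ) (ht0 : 0 ≤ t) (ht1 : t ≤ 1)
    (x : Config (EuclideanSpace ℝ (Fin p)) 2) : Function.Injective (Hfun13 p t x) := by
  have key : Hfun13 p t x 0 ≠ Hfun13 p t x 1 := by
    unfold Hfun13
    simp only [Matrix.cons_val_zero, Matrix.cons_val_one, Matrix.head_cons, one_smul]
    intro h
    have h2 := add_left_cancel h
    rw [neg_one_smul] at h2
    have hD : (((1 - t) + 2 * t * ‖x.1 0 - x.1 1‖⁻¹) / 2) • (x.1 0 - x.1 1) ≠ 0 :=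
      smul_ne_zero (ne_of_gt (coef_pos13 ht0 ht1 x)) (sub_ne13 x)
    exact ne_neg13 hD h2
  intro i j hij
  fin_cases i <;> fin_cases j <;> simp_all

def H13 (p : ℕ) :
    ContinuousMap.Homotopy (ContinuousMap.id (Config (EuclideanSpace ℝ (Fin p)) 2))
      ((gmap13 p).comp (rmap13 p)) where
  toFun := fun q => ⟨fun i => Hfun13 p (q.1 : ℝ) q.2 i,
    Hfun13_inj p _ q.1.2.1 q.1.2.2 q.2⟩
  continuous_toFun := by
    apply Continuous.subtype_mk
    apply continuous_pi
    intro i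
    have ct : Continuous (fun q : unitInterval × Config (EuclideanSpace ℝ (Fin p)) 2 =>
        (q.1 : ℝ)) := continuous_subtype_val.comp continuous_fst
    have ca : Continuous (fun q : unitInterval × Config (EuclideanSpace ℝ (Fin p)) 2 =>
        q.2.1 0) := cont_a13.comp continuous_snd
    have cb : Continuous (fun q : unitInterval × Config (EuclideanSpace ℝ (Fin p)) 2 =>
        q.2.1 1) := cont_b13.comp continuous_snd
    have cinv : Continuous (fun q : unitInterval × Config (EuclideanSpace ℝ (Fin p)) 2 =>
        ‖q.2.1 0 - q.2.1 1‖⁻¹) := cont_invnorm13.comp continuous_snd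
    unfold Hfun13
    exact (((continuous_const.sub ct).div_const 2).smul (ca.add cb)).add
      (((((continuous_const.sub ct).add ((continuous_const.mul ct).mul cinv)).div_const
        2).smul (ca.sub cb)).const_smul (![(1 : ℝ), -1] i))
  map_zero_left := fun x => by
    apply Subtype.ext
    funext i
    fin_cases i
    · show Hfun13 p 0 x 0 = x.1 0
      unfold Hfun13
      simp only [Matrix.cons_val_zero, one_smul]
      module
    · show Hfun13 p 0 x 1 = x.1 1
      unfold Hfun13
      simp only [Matrix.cons_val_one, Matrix.head_cons, Matrix.cons_val_zero, neg_one_smul]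
      module
  map_one_left := fun x => by
    apply Subtype.ext
    funext i
    fin_cases i
    · show Hfun13 p 1 x 0 = ‖x.1 0 - x.1 1‖⁻¹ • (x.1 0 - x.1 1)
      unfold Hfun13
      simp only [Matrix.cons_val_zero, one_smul]
      norm_num
    · show Hfun13 p 1 x 1 = -(‖x.1 0 - x.1 1‖⁻¹ • (x.1 0 - x.1 1))
      unfold Hfun13
      simp only [Matrix.cons_val_one, Matrix.head_cons, Matrix.cons_val_zero, neg_one_smul]
      norm_num


end Aux13

theorem stmt13 (p : ℕ) (hp : 1 ≤ p) :
    ∃ r : C(Config (EuclideanSpace ℝ (Fin p)) 2,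
        Metric.sphere (0 : EuclideanSpace ℝ (Fin p)) 1),
      (∀ x : Config (EuclideanSpace ℝ (Fin p)) 2,
        (r x : EuclideanSpace ℝ (Fin p)) = ‖x.1 0 - x.1 1‖⁻¹ • (x.1 0 - x.1 1)) ∧
      IsHtpyEquiv r := by
  refine ⟨rmap13 p, fun x => rfl, gmap13 p, ?_, ?_⟩
  · exact ⟨(H13 p).symm⟩
  · have : (rmap13 p).comp (gmap13 p) = ContinuousMap.id _ := by
      exact ContinuousMap.ext fun v => r_g13 v
    rw [this] at *
end

section
/- Let A be a smooth n-manifold, B a smooth m-manifold, and f : A → B an F₂-homotopy equivalence. Fix k ≥ 1 and suppose f_k : F_k(A×J) → F_k(B×J) and f_{k+1} : F_{k+1}(A×J) → F_{k+1}(B×J) are homotopy equivalences such that f_{k+1} maps ∂F_{k+1}(A×J) into ∂F_{k+1}(B×J) and, under the canonical homeomorphisms ∂F_{k+1}(·×J) ≅ F_k(·×J) × (· × {−k,k}), the restriction of f_{k+1} to the boundary is homotopic to f_k × (f × id_{{−k,k}}). Let P_A, P_B be topological spaces, α : P_A → F_k(A×J) and β : P_B → F_k(B×J) continuous maps, and μ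 : P_A → P_B a homotopy equivalence with f_k ∘ α homotopic to β ∘ μ. Define ᾱ : P_A × (A × {−k,k}) → F_{k+1}(A×J) by ᾱ(p,(a,ε)) = (α(p),(a,ε)) (well defined because |ε| = k strictly exceeds the heights |t_i| ≤ i−1 ≤ k−1 of the points of α(p)), and define β̄ : P_B × (B × {−k,k}) → F_{k+1}(B×J) analogously from β. Then f_{k+1} ∘ ᾱ is homotopic to β̄ ∘ (μ × (f × id_{{−k,k}})). -/
open scoped Manifold unitInterval

theorem stmt16 {n m : ℕ} (A B : Type) [TopologicalSpace A] [T2Space A] [SecondCountableTopology A] [Nonempty A]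
    [ChartedSpace (EuclideanSpace ℝ (Fin n)) A] [IsManifold (𝓡 n) (⊤ : ℕ∞) A]
    [TopologicalSpace B] [T2Space B] [SecondCountableTopology B] [Nonempty B]
    [ChartedSpace (EuclideanSpace ℝ (Fin m)) B] [IsManifold (𝓡 m) (⊤ : ℕ∞) B]
    (f : ContinuousMap.HomotopyEquiv A B) (hf : IsF2HomotopyEquiv f)
    (k : ℕ) (hk : 1 ≤ k)
    (fk : ContinuousMap.HomotopyEquiv (ConfigJ A k) (ConfigJ B k))
    (fk1 : ContinuousMap.HomotopyEquiv (ConfigJ A (k + 1)) (ConfigJ B (k + 1)))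
    (hbd : ∀ x : ConfigJ A (k + 1), |(x.1 (Fin.last k)).2| = (k : ℝ) →
      |((fk1.toFun x).1 (Fin.last k)).2| = (k : ℝ))
    (hres : ∃ H : ContinuousMap.Homotopy
        (fk1.toFun.comp (configJAppend A k))
        ((configJAppend B k).comp (fk.toFun.prodMap (f.toFun.prodMap
          (ContinuousMap.id ({-(k : ℝ), (k : ℝ)} : Set ℝ))))),
      ∀ (t : unitInterval) (p : ConfigJ A k × (A × ({-(k : ℝ), (k : ℝ)} : Set ℝ))),
        |((H (t, p)).1 (Fin.last k)).2| = (k : ℝ))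
    {PA PB : Type*} [TopologicalSpace PA] [TopologicalSpace PB]
    (α : C(PA, ConfigJ A k)) (β : C(PB, ConfigJ B k))
    (μ : ContinuousMap.HomotopyEquiv PA PB)
    (hμ : (fk.toFun.comp α).Homotopic (β.comp μ.toFun)) :
    (fk1.toFun.comp ((configJAppend A k).comp
        (α.prodMap (ContinuousMap.id (A × ({-(k : ℝ), (k : ℝ)} : Set ℝ)))))).Homotopic
      (((configJAppend B k).comp
        (β.prodMap (ContinuousMap.id (B × ({-(k : ℝ), (k : ℝ)} : Set ℝ))))).comp
        (μ.toFun.prodMap (f.toFun.prodMap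
          (ContinuousMap.id ({-(k : ℝ), (k : ℝ)} : Set ℝ))))) := by
  obtain ⟨H, -⟩ := hres
  have h1 : (fk1.toFun.comp (configJAppend A k)).Homotopic
      ((configJAppend B k).comp (fk.toFun.prodMap (f.toFun.prodMap
        (ContinuousMap.id ({-(k : ℝ), (k : ℝ)} : Set ℝ))))) := ⟨H⟩
  have h2 := ContinuousMap.Homotopic.comp h1 (ContinuousMap.Homotopic.refl
    (α.prodMap (ContinuousMap.id (A × ({-(k : ℝ), (k : ℝ)} : Set ℝ)))))
  have h3 := hμ.prodMap (ContinuousMap.Homotopic.refl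
    (f.toFun.prodMap (ContinuousMap.id ({-(k : ℝ), (k : ℝ)} : Set ℝ))))
  have h4 := (ContinuousMap.Homotopic.refl (configJAppend B k)).comp h3
  have e1 : ((configJAppend B k).comp (fk.toFun.prodMap (f.toFun.prodMap
      (ContinuousMap.id ({-(k : ℝ), (k : ℝ)} : Set ℝ))))).comp
      (α.prodMap (ContinuousMap.id (A × ({-(k : ℝ), (k : ℝ)} : Set ℝ)))) =
      (configJAppend B k).comp ((fk.toFun.comp α).prodMap (f.toFun.prodMap
      (ContinuousMap.id ({-(k : ℝ), (k : ℝ)} : Set ℝ)))) := ContinuousMap.ext fun _ => rfl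
  have e2 : (configJAppend B k).comp ((β.comp μ.toFun).prodMap (f.toFun.prodMap
      (ContinuousMap.id ({-(k : ℝ), (k : ℝ)} : Set ℝ)))) =
      (((configJAppend B k).comp
        (β.prodMap (ContinuousMap.id (B × ({-(k : ℝ), (k : ℝ)} : Set ℝ))))).comp
        (μ.toFun.prodMap (f.toFun.prodMap
          (ContinuousMap.id ({-(k : ℝ), (k : ℝ)} : Set ℝ))))) := ContinuousMap.ext fun _ => rfl
  have e0 : (fk1.toFun.comp ((configJAppend A k).comp
        (α.prodMap (ContinuousMap.id (A × ({-(k : ℝ), (k : ℝ)} : Set ℝ)))))) =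
      (fk1.toFun.comp (configJAppend A k)).comp
        (α.prodMap (ContinuousMap.id (A × ({-(k : ℝ), (k : ℝ)} : Set ℝ)))) :=
    ContinuousMap.ext fun _ => rfl
  rw [e0, ← e2]
  exact (h2.trans (e1 ▸ ContinuousMap.Homotopic.refl _)).trans h4
end
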